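/- arXiv:1601.06396 — 5 statements merged into one kernel-verified Lean document; each statement's English description precedes it below -/
import Mathlib

section
/- Let I ∈ J and let 𝒳 ⊂ ℓ₂^{BL}(I) be a set bounded in ℓ₂. Then for every ε > 0 there exists a real-valued sequence k̂ ∈ ℓ₂({1,2,3,...}) such that for every x ∈ 𝒳 and every t ∈ ℤ the series x̂(t) = e^{iω_I t} ∑_{s ≤ t−1} k̂(t−s) e^{−iω_I s} x(s) converges absolutely and |x(t) − x̂(t)| ≤ ε. -/
open MeasureTheory Complex Real Set Filter

noncomputable section

/-- Two-sided square-summable sequences: membership in `ℓ₂`. -/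
def MemL2 (x : ℤ → ℂ) : Prop := Summable fun t => ‖x t‖ ^ 2

/-- Absolutely summable sequences: membership in `ℓ₁(ℤ)`. -/
def MemL1 (x : ℤ → ℂ) : Prop := Summable fun t => ‖x t‖

/-- Inverse Z-transform of a function on `(−π, π]`:
`x(t) = (1/2π) ∫_{−π}^{π} X(e^{iω}) e^{iωt} dω`. -/
def invZ (X : ℝ → ℂ) (t : ℤ) : ℂ :=
  ((1 / (2 * π) : ℝ) : ℂ) *
    ∫ ω in Set.Ioc (-π) π, X ω * Complex.exp (Complex.I * (ω : ℂ) * (t : ℂ))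

/-- `x ∈ ℓ₂^{BL}(S)`: `x` is square-summable and its Z-transform vanishes a.e. outside `S`,
expressed by saying that `x` is the inverse Z-transform of some `X ∈ L²` of the circle
vanishing a.e. outside `S`. -/
def BandLimited (S : Set ℝ) (x : ℤ → ℂ) : Prop :=
  MemL2 x ∧ ∃ X : ℝ → ℂ,
    MemLp X 2 (volume.restrict (Set.Ioc (-π) π)) ∧
    (∀ᵐ ω ∂volume.restrict (Set.Ioc (-π) π), ω ∉ S → X ω = 0) ∧
    ∀ t : ℤ, x t = invZ X t

/-- An element of the class `J`: a proper connected arc of the circle, recorded via the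
angle `mid` of its middle point and its half-length `halfLen` (so `mes(I) = 2·halfLen`);
`halfLen < π` makes the complementary set nonempty. -/
structure Arc where
  mid : ℝ
  halfLen : ℝ
  mid_mem : mid ∈ Set.Ioc (-π) π
  halfLen_pos : 0 < halfLen
  halfLen_lt : halfLen < π

/-- The subset of `(−π, π]` corresponding to the arc `{e^{iω} : |ω − mid| < halfLen (mod 2π)}`. -/
def Arc.set (I : Arc) : Set ℝ :=
  {ω | ω ∈ Set.Ioc (-π) π ∧ ∃ k : ℤ, |ω - I.mid + 2 * π * (k : ℝ)| < I.halfLen}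

/-- One-sided sequences, defined on `{t ∈ ℤ : t ≤ 0}`. -/
abbrev NegSeq := {t : ℤ // t ≤ 0} → ℂ

/-- Membership in `ℓ₂⁻`. -/
def MemL2Neg (x : NegSeq) : Prop := Summable fun t => ‖x t‖ ^ 2

/-- `x ∈ ℓ₂^{−,LBL}(S)`: `x` is the trace on `{t ≤ 0}` of a band-limited sequence with
spectrum in `S`. -/
def LBL (S : Set ℝ) (x : NegSeq) : Prop :=
  ∃ xBL : ℤ → ℂ, BandLimited S xBL ∧ ∀ t : {t : ℤ // t ≤ 0}, x t = xBL t.1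

/-- `p` is the optimal approximation of `x` in `ℓ₂^{−,LBL}(S)`, i.e. a minimizer of
`∑_{t≤0} |p(t) − x(t)|²` over `ℓ₂^{−,LBL}(S)`. -/
def IsOptApprox (S : Set ℝ) (x p : NegSeq) : Prop :=
  LBL S p ∧ ∀ z : NegSeq, LBL S z →
    (∑' t, ‖p t - x t‖ ^ 2) ≤ ∑' t, ‖z t - x t‖ ^ 2

/-- `sinc(u) = sin(u)/u` (with value `1` at `u = 0`). -/
def sinc (u : ℝ) : ℝ := if u = 0 then 1 else Real.sin u / u

/-- `z θ = e^{-iθ}`. -/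
def zz (θ : ℝ) : ℂ := Complex.exp (-Complex.I * θ)

/-- approximable on `[-h,h]` by real polynomials in `e^{-iθ}`. -/
def IsApx (h : ℝ) (g : ℝ → ℂ) : Prop :=
  ∀ δ : ℝ, 0 < δ → ∃ p : Polynomial ℝ, ∀ θ : ℝ, |θ| ≤ h →
    ‖g θ - Polynomial.aeval (zz θ) p‖ ≤ δ

lemma zz_norm (θ : ℝ) : ‖zz θ‖ = 1 := by
  simp [zz, Complex.norm_exp]

lemma isApx_const (h : ℝ) (c : ℝ) : IsApx h (fun _ => (c : ℂ)) := by
  intro δ hδ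
  exact ⟨Polynomial.C c, fun θ _ => by simp [hδ.le]⟩

lemma isApx_zz (h : ℝ) : IsApx h zz := by
  intro δ hδ
  exact ⟨Polynomial.X, fun θ _ => by simp [hδ.le]⟩

lemma IsApx.add {h : ℝ} {g₁ g₂ : ℝ → ℂ} (h₁ : IsApx h g₁) (h₂ : IsApx h g₂) :
    IsApx h (fun θ => g₁ θ + g₂ θ) := by
  intro δ hδ
  obtain ⟨p₁, hp₁⟩ := h₁ (δ/2) (by positivity)
  obtain ⟨p₂, hp₂⟩ := h₂ (δ/2) (by positivity)
  refine ⟨p₁ + p₂, fun θ hθ => ?_⟩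
  have := hp₁ θ hθ; have := hp₂ θ hθ
  rw [map_add]
  calc ‖g₁ θ + g₂ θ - (Polynomial.aeval (zz θ) p₁ + Polynomial.aeval (zz θ) p₂)‖
      = ‖(g₁ θ - Polynomial.aeval (zz θ) p₁) + (g₂ θ - Polynomial.aeval (zz θ) p₂)‖ := by
        ring_nf
    _ ≤ ‖g₁ θ - Polynomial.aeval (zz θ) p₁‖ + ‖g₂ θ - Polynomial.aeval (zz θ) p₂‖ :=
        norm_add_le _ _
    _ ≤ δ/2 + δ/2 := by gcongr
    _ = δ := by ring

lemma IsApx.smul {h : ℝ} {g : ℝ → ℂ} (hg : IsApx h g) (c : ℝ) :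
    IsApx h (fun θ => (c : ℂ) * g θ) := by
  intro δ hδ
  obtain ⟨p, hp⟩ := hg (δ / (|c| + 1)) (by positivity)
  refine ⟨Polynomial.C c * p, fun θ hθ => ?_⟩
  rw [map_mul, Polynomial.aeval_C]
  calc ‖(c:ℂ) * g θ - algebraMap ℝ ℂ c * Polynomial.aeval (zz θ) p‖
      = |c| * ‖g θ - Polynomial.aeval (zz θ) p‖ := by
        rw [show (algebraMap ℝ ℂ) c = (c:ℂ) from rfl, ← mul_sub, norm_mul,
          Complex.norm_real, Real.norm_eq_abs]
    _ ≤ |c| * (δ / (|c| + 1)) := by gcongr; exact hp θ hθ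
    _ ≤ δ := by
        rw [div_eq_inv_mul, ← mul_assoc]
        have : |c| * (|c| + 1)⁻¹ ≤ 1 := by
          rw [mul_inv_le_iff₀ (by positivity)]; linarith [abs_nonneg c]
        nlinarith [hδ.le]

lemma IsApx.mul {h : ℝ} {g₁ g₂ : ℝ → ℂ} {B₁ B₂ : ℝ} (h₁ : IsApx h g₁) (h₂ : IsApx h g₂)
    (hB₁0 : 0 ≤ B₁) (hB₂0 : 0 ≤ B₂)
    (hB₁ : ∀ θ, |θ| ≤ h → ‖g₁ θ‖ ≤ B₁) (hB₂ : ∀ θ, |θ| ≤ h → ‖g₂ θ‖ ≤ B₂) :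
    IsApx h (fun θ => g₁ θ * g₂ θ) := by
  intro δ hδ
  obtain ⟨p₁, hp₁⟩ := h₁ (δ / (2 * (B₂ + 2))) (by positivity)
  obtain ⟨p₂, hp₂⟩ := h₂ (min 1 (δ / (2 * (B₁ + 1)))) (by positivity)
  refine ⟨p₁ * p₂, fun θ hθ => ?_⟩
  rw [map_mul]
  set q₁ := Polynomial.aeval (zz θ) p₁
  set q₂ := Polynomial.aeval (zz θ) p₂
  have e1 : ‖g₁ θ - q₁‖ ≤ δ / (2 * (B₂ + 2)) := hp₁ θ hθ
  have e2 : ‖g₂ θ - q₂‖ ≤ min 1 (δ / (2 * (B₁ + 1))) := hp₂ θ hθ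
  have hq₂ : ‖q₂‖ ≤ B₂ + 1 := by
    have : ‖q₂‖ ≤ ‖g₂ θ‖ + ‖g₂ θ - q₂‖ := by
      calc ‖q₂‖ = ‖g₂ θ - (g₂ θ - q₂)‖ := by ring_nf
        _ ≤ ‖g₂ θ‖ + ‖g₂ θ - q₂‖ := norm_sub_le _ _
    have := hB₂ θ hθ
    have := le_trans e2 (min_le_left _ _)
    linarith
  calc ‖g₁ θ * g₂ θ - q₁ * q₂‖
      = ‖g₁ θ * (g₂ θ - q₂) + (g₁ θ - q₁) * q₂‖ := by ring_nf
    _ ≤ ‖g₁ θ * (g₂ θ - q₂)‖ + ‖(g₁ θ - q₁) * q₂‖ := norm_add_le _ _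
    _ = ‖g₁ θ‖ * ‖g₂ θ - q₂‖ + ‖g₁ θ - q₁‖ * ‖q₂‖ := by rw [norm_mul, norm_mul]
    _ ≤ B₁ * (δ / (2 * (B₁ + 1))) + (δ / (2 * (B₂ + 2))) * (B₂ + 1) :=
        add_le_add
          (mul_le_mul (hB₁ θ hθ) (le_trans e2 (min_le_right _ _)) (norm_nonneg _) hB₁0)
          (mul_le_mul e1 hq₂ (norm_nonneg _) (by positivity))
    _ ≤ δ / 2 + δ / 2 := by
        have hA : B₁ * (δ / (2 * (B₁ + 1))) ≤ δ / 2 := by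
          rw [mul_div_assoc']
          rw [div_le_div_iff₀ (by positivity) (by norm_num)]
          nlinarith
        have hBq : (δ / (2 * (B₂ + 2))) * (B₂ + 1) ≤ δ / 2 := by
          rw [div_mul_eq_mul_div, div_le_div_iff₀ (by positivity) (by norm_num)]
          nlinarith
        linarith
    _ = δ := by ring

lemma IsApx.pow {h : ℝ} {g : ℝ → ℂ} {B : ℝ} (hg : IsApx h g) (hB0 : 0 ≤ B)
    (hB : ∀ θ, |θ| ≤ h → ‖g θ‖ ≤ B) (j : ℕ) :
    IsApx h (fun θ => (g θ) ^ j) := by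
  induction j with
  | zero => simpa using isApx_const h 1
  | succ n ih =>
      have hpowB : ∀ θ, |θ| ≤ h → ‖(g θ) ^ n‖ ≤ B ^ n := by
        intro θ hθ
        rw [norm_pow]
        exact pow_le_pow_left₀ (norm_nonneg _) (hB θ hθ) n
      have := IsApx.mul ih hg (pow_nonneg hB0 n) hB0 hpowB hB
      simpa [pow_succ] using this

lemma isApx_of_close {h : ℝ} {g : ℝ → ℂ}
    (H : ∀ δ : ℝ, 0 < δ → ∃ g' : ℝ → ℂ, IsApx h g' ∧ ∀ θ, |θ| ≤ h → ‖g θ - g' θ‖ ≤ δ) :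
    IsApx h g := by
  intro δ hδ
  obtain ⟨g', hg', hclose⟩ := H (δ/2) (by positivity)
  obtain ⟨p, hp⟩ := hg' (δ/2) (by positivity)
  refine ⟨p, fun θ hθ => ?_⟩
  calc ‖g θ - Polynomial.aeval (zz θ) p‖
      = ‖(g θ - g' θ) + (g' θ - Polynomial.aeval (zz θ) p)‖ := by ring_nf
    _ ≤ ‖g θ - g' θ‖ + ‖g' θ - Polynomial.aeval (zz θ) p‖ := norm_add_le _ _
    _ ≤ δ/2 + δ/2 := add_le_add (hclose θ hθ) (hp θ hθ)
    _ = δ := by ring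

/-- shifted pole resolvent `1/(e^{-iθ} + r)`. -/
def fr (r : ℝ) (θ : ℝ) : ℂ := (zz θ + (r : ℂ))⁻¹

lemma fr_lb {h : ℝ} (hπ : h < π) {r θ : ℝ} (hr : 0 ≤ r) (hθ : |θ| ≤ h) :
    Real.sin h ≤ ‖zz θ + (r : ℂ)‖ := by
  have hzz : zz θ = Complex.exp ((↑(-θ) : ℂ) * Complex.I) := by
    unfold zz; congr 1; push_cast; ring
  have hre : (zz θ + (r : ℂ)).re = Real.cos θ + r := by
    rw [Complex.add_re, hzz, Complex.exp_ofReal_mul_I_re]; simp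
  have him : (zz θ + (r : ℂ)).im = -Real.sin θ := by
    rw [Complex.add_im, hzz, Complex.exp_ofReal_mul_I_im]; simp
  have hsq : ‖zz θ + (r : ℂ)‖ ^ 2 = (Real.cos θ + r) ^ 2 + (Real.sin θ) ^ 2 := by
    rw [Complex.sq_norm, Complex.normSq_apply, hre, him]; ring
  have hcos : Real.cos h ≤ Real.cos θ := by
    rw [← Real.cos_abs θ]
    exact Real.cos_le_cos_of_nonneg_of_le_pi (abs_nonneg θ) (le_of_lt hπ) hθ
  have hpyth : (Real.cos h) ^ 2 + (Real.sin h) ^ 2 = 1 := by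
    rw [add_comm]; exact Real.sin_sq_add_cos_sq h
  have hpyth2 : (Real.cos θ) ^ 2 + (Real.sin θ) ^ 2 = 1 := by
    rw [add_comm]; exact Real.sin_sq_add_cos_sq θ
  have hlow : (Real.sin h) ^ 2 ≤ ‖zz θ + (r : ℂ)‖ ^ 2 := by
    rw [hsq]
    nlinarith [sq_nonneg (Real.cos θ + r), sq_nonneg (Real.cos h + r), hcos, hr,
      sq_nonneg (Real.cos θ - Real.cos h)]
  have hsin : 0 ≤ Real.sin h :=
    Real.sin_nonneg_of_nonneg_of_le_pi (le_trans (abs_nonneg θ) hθ) hπ.le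
  nlinarith [norm_nonneg (zz θ + (r : ℂ))]

lemma sin_pos_of {h : ℝ} (h0 : 0 < h) (hπ : h < π) : 0 < Real.sin h :=
  Real.sin_pos_of_pos_of_lt_pi h0 hπ

lemma fr_ne {h : ℝ} (h0 : 0 < h) (hπ : h < π) {r θ : ℝ} (hr : 0 ≤ r) (hθ : |θ| ≤ h) :
    zz θ + (r : ℂ) ≠ 0 := by
  intro hz
  have := fr_lb hπ hr hθ
  rw [hz] at this
  simp at this
  nlinarith [sin_pos_of h0 hπ]

lemma fr_ub {h : ℝ} (h0 : 0 < h) (hπ : h < π) {r θ : ℝ} (hr : 0 ≤ r) (hθ : |θ| ≤ h) :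
    ‖fr r θ‖ ≤ (Real.sin h)⁻¹ := by
  unfold fr
  rw [norm_inv]
  exact inv_anti₀ (sin_pos_of h0 hπ) (fr_lb hπ hr hθ)

lemma geom_id (θ : ℝ) (hz2 : zz θ + (2 : ℂ) ≠ 0) (n : ℕ) :
    ∑ j ∈ Finset.range n, ((-1/2 : ℂ)^j / 2) * (zz θ)^j
      = (1 - (-(zz θ)/2)^n) / (zz θ + 2) := by
  induction n with
  | zero => simp
  | succ m ih =>
      rw [Finset.sum_range_succ, ih, pow_succ]
      field_simp
      ring

lemma isApx_fr_two {h : ℝ} (h0 : 0 < h) (hπ : h < π) : IsApx h (fr 2) := by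
  intro δ hδ
  obtain ⟨n, hn⟩ := exists_pow_lt_of_lt_one hδ (by norm_num : (1/2 : ℝ) < 1)
  refine ⟨∑ j ∈ Finset.range n, Polynomial.C ((-1/2 : ℝ)^j / 2) * Polynomial.X ^ j,
    fun θ hθ => ?_⟩
  have hz1 : ‖zz θ‖ = 1 := zz_norm θ
  have hz2 : (1 : ℝ) ≤ ‖zz θ + (2 : ℂ)‖ := by
    have key : ‖(2:ℂ)‖ ≤ ‖zz θ + (2:ℂ)‖ + ‖zz θ‖ := by
      calc ‖(2:ℂ)‖ = ‖(zz θ + (2:ℂ)) - zz θ‖ := by ring_nf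
        _ ≤ ‖zz θ + (2:ℂ)‖ + ‖zz θ‖ := norm_sub_le _ _
    have h2 : ‖(2:ℂ)‖ = 2 := by norm_num
    rw [h2, hz1] at key
    linarith
  have hz2' : zz θ + (2 : ℂ) ≠ 0 := by
    intro hc; rw [hc] at hz2; simp at hz2; linarith
  have heval : Polynomial.aeval (zz θ)
      (∑ j ∈ Finset.range n, Polynomial.C ((-1/2 : ℝ)^j / 2) * Polynomial.X ^ j)
      = ∑ j ∈ Finset.range n, ((-1/2 : ℂ)^j / 2) * (zz θ)^j := by
    rw [map_sum]
    congr 1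
    ext j
    rw [map_mul, Polynomial.aeval_C, map_pow, Polynomial.aeval_X]
    congr 1
    push_cast
    ring
  rw [heval, geom_id θ hz2' n]
  have herr : fr 2 θ - (1 - (-(zz θ)/2)^n) / (zz θ + 2)
      = (-(zz θ)/2)^n / (zz θ + 2) := by
    unfold fr
    push_cast
    field_simp
    ring
  rw [herr]
  rw [norm_div, norm_pow]
  have hnum : ‖-(zz θ)/2‖ = 1/2 := by
    rw [norm_div, norm_neg, hz1]; norm_num
  rw [hnum]
  calc (1/2 : ℝ)^n / ‖zz θ + 2‖ ≤ (1/2)^n / 1 := by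
        apply div_le_div_of_nonneg_left (by positivity) (by norm_num) hz2
    _ ≤ δ := by rw [div_one]; exact hn.le

lemma fr_key_id {h : ℝ} (h0 : 0 < h) (hπ : h < π) {r s θ : ℝ} (hs0 : 0 ≤ s) (hsr : s ≤ r)
    (hθ : |θ| ≤ h) :
    fr (r - s) θ * (1 - (s : ℂ) * fr r θ) = fr r θ := by
  have hr0 : 0 ≤ r := le_trans hs0 hsr
  have h1 : zz θ + (r : ℂ) ≠ 0 := fr_ne h0 hπ hr0 hθ
  have h2 : zz θ + ((r - s : ℝ) : ℂ) ≠ 0 := fr_ne h0 hπ (by linarith) hθ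
  unfold fr
  push_cast at h2 ⊢
  field_simp
  ring

lemma fr_err_id {h : ℝ} (h0 : 0 < h) (hπ : h < π) {r s θ : ℝ} (hs0 : 0 ≤ s) (hsr : s ≤ r)
    (hθ : |θ| ≤ h) (n : ℕ) :
    fr (r - s) θ - ∑ j ∈ Finset.range n, ((s : ℂ))^j * (fr r θ)^(j+1)
      = fr (r - s) θ * ((s : ℂ) * fr r θ)^n := by
  induction n with
  | zero => simp
  | succ m ih =>
      rw [Finset.sum_range_succ]
      have key := fr_key_id h0 hπ hs0 hsr hθ (r := r)
      have : fr (r - s) θ * ((s:ℂ) * fr r θ)^m * (1 - (s:ℂ) * fr r θ)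
          = ((s:ℂ))^m * (fr r θ)^(m+1) := by
        calc fr (r - s) θ * ((s:ℂ) * fr r θ)^m * (1 - (s:ℂ) * fr r θ)
            = (fr (r - s) θ * (1 - (s:ℂ) * fr r θ)) * ((s:ℂ) * fr r θ)^m := by ring
          _ = fr r θ * ((s:ℂ) * fr r θ)^m := by rw [key]
          _ = ((s:ℂ))^m * (fr r θ)^(m+1) := by rw [mul_pow]; ring
      calc fr (r - s) θ - (∑ j ∈ Finset.range m, ((s : ℂ))^j * (fr r θ)^(j+1)
            + ((s:ℂ))^m * (fr r θ)^(m+1))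
          = (fr (r - s) θ - ∑ j ∈ Finset.range m, ((s : ℂ))^j * (fr r θ)^(j+1))
            - ((s:ℂ))^m * (fr r θ)^(m+1) := by ring
        _ = fr (r - s) θ * ((s : ℂ) * fr r θ)^m - ((s:ℂ))^m * (fr r θ)^(m+1) := by rw [ih]
        _ = fr (r - s) θ * ((s : ℂ) * fr r θ)^m
            - fr (r - s) θ * ((s:ℂ) * fr r θ)^m * (1 - (s:ℂ) * fr r θ) := by rw [this]
        _ = fr (r - s) θ * ((s : ℂ) * fr r θ)^(m+1) := by ring

lemma isApx_step {h : ℝ} (h0 : 0 < h) (hπ : h < π) {r s : ℝ} (hr2 : r ≤ 2)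
    (hs0 : 0 ≤ s) (hsr : s ≤ r) (hsq : s ≤ Real.sin h / 2)
    (hap : IsApx h (fr r)) : IsApx h (fr (r - s)) := by
  have hd : 0 < Real.sin h := sin_pos_of h0 hπ
  have hr0 : 0 ≤ r := le_trans hs0 hsr
  apply isApx_of_close
  intro δ hδ
  obtain ⟨n, hn⟩ := exists_pow_lt_of_lt_one (show (0:ℝ) < δ * Real.sin h by positivity)
    (by norm_num : (1/2 : ℝ) < 1)
  refine ⟨fun θ => ∑ j ∈ Finset.range n, ((s : ℂ))^j * (fr r θ)^(j+1), ?_, ?_⟩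
  · -- the partial sum is approximable
    have : ∀ m : ℕ, IsApx h (fun θ => ∑ j ∈ Finset.range m, ((s : ℂ))^j * (fr r θ)^(j+1)) := by
      intro m
      induction m with
      | zero => simpa using isApx_const h 0
      | succ k ihk =>
          have hpow : IsApx h (fun θ => (fr r θ)^(k+1)) :=
            IsApx.pow hap (by positivity) (fun θ hθ => fr_ub h0 hπ hr0 hθ) (k+1)
          have hterm : IsApx h (fun θ => (((s^k : ℝ)) : ℂ) * (fr r θ)^(k+1)) :=
            IsApx.smul hpow (s^k)
          have hsum := IsApx.add ihk hterm
          intro δ' hδ'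
          obtain ⟨p, hp⟩ := hsum δ' hδ'
          refine ⟨p, fun θ hθ => ?_⟩
          have hthis := hp θ hθ
          have hAB : (∑ j ∈ Finset.range (k+1), ((s:ℂ))^j * (fr r θ)^(j+1))
              = ∑ j ∈ Finset.range k, ((s:ℂ))^j * (fr r θ)^(j+1)
                + (((s^k : ℝ)) : ℂ) * (fr r θ)^(k+1) := by
            rw [Finset.sum_range_succ]; push_cast; ring
          show ‖(∑ j ∈ Finset.range (k+1), ((s:ℂ))^j * (fr r θ)^(j+1))
              - Polynomial.aeval (zz θ) p‖ ≤ δ'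
          rw [hAB]
          exact hthis
    exact this n
  · intro θ hθ
    rw [fr_err_id h0 hπ hs0 hsr hθ n]
    have hb1 : ‖fr (r - s) θ‖ ≤ (Real.sin h)⁻¹ := fr_ub h0 hπ (by linarith) hθ
    have hb2 : ‖(s : ℂ) * fr r θ‖ ≤ 1/2 := by
      rw [norm_mul, Complex.norm_real, Real.norm_eq_abs, _root_.abs_of_nonneg hs0]
      calc s * ‖fr r θ‖ ≤ (Real.sin h / 2) * (Real.sin h)⁻¹ := by
            apply mul_le_mul hsq (fr_ub h0 hπ hr0 hθ) (norm_nonneg _) (by positivity)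
        _ = 1/2 := by field_simp
    calc ‖fr (r - s) θ * ((s : ℂ) * fr r θ)^n‖
        = ‖fr (r - s) θ‖ * ‖(s : ℂ) * fr r θ‖^n := by rw [norm_mul, norm_pow]
      _ ≤ (Real.sin h)⁻¹ * (1/2)^n := by
          apply mul_le_mul hb1 (pow_le_pow_left₀ (norm_nonneg _) hb2 n) (by positivity)
            (by positivity)
      _ ≤ (Real.sin h)⁻¹ * (δ * Real.sin h) := by
          apply mul_le_mul_of_nonneg_left hn.le (by positivity)
      _ = δ := by field_simp

lemma isApx_fr_zero {h : ℝ} (h0 : 0 < h) (hπ : h < π) : IsApx h (fr 0) := by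
  have hd : 0 < Real.sin h := sin_pos_of h0 hπ
  set q := Real.sin h / 2 with hq
  have hq0 : 0 < q := by positivity
  have main : ∀ n : ℕ, IsApx h (fr (max 0 (2 - n * q))) := by
    intro n
    induction n with
    | zero =>
        have h2 : (max 0 (2 - (0:ℕ) * q) : ℝ) = 2 := by norm_num
        rw [h2]
        exact isApx_fr_two h0 hπ
    | succ m ih =>
        set a := 2 - m * q with ha
        have hstep : (2 : ℝ) - (m+1) * q = a - q := by push_cast; ring
        set r := max 0 a with hr
        set r' := max 0 (a - q) with hr'
        have hr'le : r' ≤ r := max_le_max le_rfl (by linarith)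
        have hrs : r - r' ≤ q := by
          rcases le_total a 0 with hc | hc
          · have h1 : r = 0 := max_eq_left hc
            have h2 : 0 ≤ r' := le_max_left _ _
            linarith
          · have h1 : r = a := max_eq_right hc
            have h2 : a - q ≤ r' := le_max_right _ _
            linarith
        have hr2 : r ≤ 2 := by
          rcases le_total a 0 with hc | hc
          · rw [hr, max_eq_left hc]; norm_num
          · rw [hr, max_eq_right hc]
            have : (0:ℝ) ≤ (m:ℝ) * q := by positivity
            linarith
        have hr'0 : 0 ≤ r' := le_max_left _ _
        have := isApx_step h0 hπ hr2 (show 0 ≤ r - r' by linarith)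
          (show r - r' ≤ r by linarith) (by linarith) ih
        have hrr : r - (r - r') = r' := by ring
        rw [hrr] at this
        have hgoal : (max 0 (2 - ((m+1 : ℕ) : ℝ) * q)) = r' := by
          rw [hr']
          congr 1
          push_cast
          linarith [hstep]
        rw [hgoal]
        exact this
  obtain ⟨N, hN⟩ := exists_nat_ge (2 / q)
  have h2N : 2 - N * q ≤ 0 := by
    have : 2 / q ≤ N := hN
    have : 2 ≤ N * q := by
      rw [div_le_iff₀ hq0] at this
      linarith
    linarith
  have hmain := main N
  rwa [max_eq_left h2N] at hmain

lemma isApx_expI {h : ℝ} (h0 : 0 < h) (hπ : h < π) :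
    IsApx h (fun θ => Complex.exp (Complex.I * θ)) := by
  have := isApx_fr_zero h0 hπ
  have heq : ∀ θ : ℝ, fr 0 θ = Complex.exp (Complex.I * θ) := by
    intro θ
    unfold fr zz
    rw [Complex.ofReal_zero, add_zero, ← Complex.exp_neg]
    congr 1
    ring
  intro δ hδ
  obtain ⟨p, hp⟩ := this δ hδ
  exact ⟨p, fun θ hθ => by
    show ‖Complex.exp (Complex.I * θ) - Polynomial.aeval (zz θ) p‖ ≤ δ
    rw [← heq θ]; exact hp θ hθ⟩

/-- The key approximation: a real trigonometric polynomial with only frequencies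
`e^{-imθ}`, `m ≥ 1`, uniformly close to `1` on `[-h, h]`, `h < π`. -/
lemma approx_main {h : ℝ} (h0 : 0 < h) (hπ : h < π) {δ : ℝ} (hδ : 0 < δ) :
    ∃ (M : ℕ) (c : ℕ → ℝ), (∀ m, M ≤ m → c m = 0) ∧
      ∀ θ : ℝ, |θ| ≤ h →
        ‖1 - ∑ n ∈ Finset.range M, ((c n : ℂ)) *
            Complex.exp (-Complex.I * ((n : ℂ) + 1) * (θ : ℂ))‖ ≤ δ := by
  obtain ⟨p, hp⟩ := isApx_expI h0 hπ δ hδ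
  refine ⟨p.natDegree + 1, fun n => p.coeff n, fun m hm => ?_, fun θ hθ => ?_⟩
  · exact p.coeff_eq_zero_of_natDegree_lt (by omega)
  · have heval : Polynomial.aeval (zz θ) p
        = ∑ n ∈ Finset.range (p.natDegree + 1), ((p.coeff n : ℂ)) * (zz θ)^n := by
      rw [Polynomial.aeval_eq_sum_range]
      exact Finset.sum_congr rfl fun n _ => by rw [Complex.real_smul]
    have hsum : ∑ n ∈ Finset.range (p.natDegree + 1), ((p.coeff n : ℂ)) *
          Complex.exp (-Complex.I * ((n : ℂ) + 1) * (θ : ℂ))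
        = zz θ * Polynomial.aeval (zz θ) p := by
      rw [heval, Finset.mul_sum]
      congr 1
      ext n
      rw [show zz θ * ((p.coeff n : ℂ) * (zz θ)^n) = (p.coeff n : ℂ) * ((zz θ)^(n+1)) by ring]
      congr 1
      unfold zz
      rw [← Complex.exp_nat_mul]
      congr 1
      push_cast
      ring
    rw [hsum]
    have hone : (1 : ℂ) = zz θ * Complex.exp (Complex.I * θ) := by
      unfold zz
      rw [← Complex.exp_add]
      rw [show -Complex.I * θ + Complex.I * θ = 0 by ring, Complex.exp_zero]
    rw [hone, ← mul_sub, norm_mul, zz_norm, one_mul]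
    exact hp θ hθ


lemma Ioc_eq : Ioc (-π) (-π + 2*π) = Ioc (-π) π := by
  rw [show -π + 2*π = π by ring]

lemma parseval_bound (X : ℝ → ℂ) (hsm : StronglyMeasurable X)
    (hX : MemLp X 2 (volume.restrict (Ioc (-π) π))) :
    ∫ ω in Ioc (-π) π, ‖X ω‖^2 = (2*π) * ∑' t : ℤ, ‖invZ X t‖^2 := by
  haveI : Fact (0 < 2*π) := ⟨Real.two_pi_pos⟩
  set F : AddCircle (2*π) → ℂ := AddCircle.liftIoc (2*π) (-π) X with hF
  have hFmeas : Measurable F := by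
    rw [hF]
    unfold AddCircle.liftIoc
    exact (hsm.measurable.comp measurable_subtype_coe).comp
      (AddCircle.measurableEquivIoc (2*π) (-π)).measurable
  have hFmk : ∀ ω ∈ Ioc (-π) π, F ((ω : ℝ) : AddCircle (2*π)) = X ω := by
    intro ω hω
    exact AddCircle.liftIoc_coe_apply (Ioc_eq ▸ hω)
  -- MemLp of F wrt volume on the circle
  have hcomp : (fun ω : ℝ => F ((ω : ℝ) : AddCircle (2*π)))
      =ᵐ[volume.restrict (Ioc (-π) π)] X := by
    filter_upwards [ae_restrict_mem measurableSet_Ioc] with ω hω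
    exact hFmk ω hω
  have hmp : MeasurePreserving ((↑) : ℝ → AddCircle (2*π))
      (volume.restrict (Ioc (-π) π)) volume := by
    have := AddCircle.measurePreserving_mk (2*π) (-π)
    rwa [Ioc_eq] at this
  have hFL2vol : MemLp F 2 (volume : Measure (AddCircle (2*π))) := by
    constructor
    · exact hFmeas.stronglyMeasurable.aestronglyMeasurable
    · have : eLpNorm (F ∘ ((↑) : ℝ → AddCircle (2*π))) 2 (volume.restrict (Ioc (-π) π))
          = eLpNorm F 2 (volume : Measure (AddCircle (2*π))) :=
        eLpNorm_comp_measurePreserving hFmeas.stronglyMeasurable.aestronglyMeasurable hmp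
      rw [← this]
      have heq : eLpNorm (F ∘ ((↑) : ℝ → AddCircle (2*π))) 2 (volume.restrict (Ioc (-π) π))
          = eLpNorm X 2 (volume.restrict (Ioc (-π) π)) := eLpNorm_congr_ae hcomp
      rw [heq]
      exact hX.2
  have hc0 : ENNReal.ofReal (2*π) ≠ 0 := by
    simp only [ne_eq, ENNReal.ofReal_eq_zero, not_le]
    exact Real.two_pi_pos
  have hvol : (volume : Measure (AddCircle (2*π)))
      = ENNReal.ofReal (2*π) • AddCircle.haarAddCircle :=
    AddCircle.volume_eq_smul_haarAddCircle
  have hhaar : (AddCircle.haarAddCircle : Measure (AddCircle (2*π)))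
      = (ENNReal.ofReal (2*π))⁻¹ • volume := by
    rw [hvol, smul_smul, ENNReal.inv_mul_cancel hc0 ENNReal.ofReal_ne_top, one_smul]
  have hFL2 : MemLp F 2 (AddCircle.haarAddCircle (T := 2*π)) := by
    constructor
    · exact hFmeas.stronglyMeasurable.aestronglyMeasurable
    · rw [hhaar, eLpNorm_smul_measure_of_ne_zero
        (ENNReal.inv_ne_zero.mpr ENNReal.ofReal_ne_top)]
      rw [smul_eq_mul]
      exact ENNReal.mul_lt_top
        (ENNReal.rpow_lt_top_of_nonneg (by norm_num) (ENNReal.inv_ne_top.mpr hc0))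
        hFL2vol.2
  -- Fourier coefficients of F are the invZ values
  have hFC : ∀ n : ℤ, fourierCoeff F n = invZ X (-n) := by
    intro n
    rw [fourierCoeff_eq_intervalIntegral F n (-π),
      intervalIntegral.integral_of_le (by linarith [Real.two_pi_pos] : -π ≤ -π + 2*π),
      Ioc_eq, invZ]
    rw [Complex.real_smul]
    congr 1
    apply setIntegral_congr_fun measurableSet_Ioc
    intro x hx
    dsimp only
    rw [smul_eq_mul, hFmk x hx, fourier_coe_apply, mul_comm]
    congr 1
    have hpi : ((π:ℂ)) ≠ 0 := by exact_mod_cast Real.pi_ne_zero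
    congr 1
    push_cast
    field_simp
  -- Parseval
  have hpars := tsum_sq_fourierCoeff (hFL2.toLp F)
  have hcoeff : ∀ i : ℤ, fourierCoeff ((hFL2.toLp F : Lp ℂ 2 (AddCircle.haarAddCircle)) :
      AddCircle (2*π) → ℂ) i = fourierCoeff F i := by
    intro i
    unfold fourierCoeff
    apply integral_congr_ae
    filter_upwards [hFL2.coeFn_toLp] with t ht
    rw [ht]
  have hrhs : ∫ t : AddCircle (2*π), ‖(hFL2.toLp F : Lp ℂ 2 (AddCircle.haarAddCircle)) t‖^2
      ∂AddCircle.haarAddCircle = ∫ t : AddCircle (2*π), ‖F t‖^2 ∂AddCircle.haarAddCircle := by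
    apply integral_congr_ae
    filter_upwards [hFL2.coeFn_toLp] with t ht
    rw [ht]
  rw [hrhs] at hpars
  simp_rw [hcoeff] at hpars
  -- change of measure haar → volume on circle → Ioc
  have hint1 : ∫ t : AddCircle (2*π), ‖F t‖^2 ∂(volume : Measure (AddCircle (2*π)))
      = ((ENNReal.ofReal (2*π)).toReal) • ∫ t : AddCircle (2*π), ‖F t‖^2
          ∂AddCircle.haarAddCircle := by
    rw [hvol, integral_smul_measure]
  have hint2 : (∫ a in Ioc (-π) (-π + 2*π), ‖F (a : AddCircle (2*π))‖^2)
      = ∫ t : AddCircle (2*π), ‖F t‖^2 ∂(volume : Measure (AddCircle (2*π))) :=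
    AddCircle.integral_preimage (2*π) (-π) (fun b => ‖F b‖^2)
  have hint3 : (∫ a in Ioc (-π) (-π + 2*π), ‖F (a : AddCircle (2*π))‖^2)
      = ∫ ω in Ioc (-π) π, ‖X ω‖^2 := by
    rw [Ioc_eq]
    apply setIntegral_congr_fun measurableSet_Ioc
    intro x hx
    dsimp only
    rw [hFmk x hx]
  -- reindex the tsum
  have hre : ∑' i : ℤ, ‖invZ X (-i)‖^2 = ∑' t : ℤ, ‖invZ X t‖^2 :=
    (Equiv.neg ℤ).tsum_eq (fun t => ‖invZ X t‖^2)
  simp_rw [hFC] at hpars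
  rw [hre] at hpars
  rw [← hint3, hint2, hint1, ← hpars]
  rw [ENNReal.toReal_ofReal Real.two_pi_pos.le, smul_eq_mul]

lemma norm_exp_I_re_zero {z : ℂ} (hz : z.re = 0) : ‖Complex.exp z‖ = 1 := by
  rw [Complex.norm_exp, hz, Real.exp_zero]


/-- a bounded set `𝒳 ⊂ ℓ₂^{BL}(I)`, `I ∈ J`, is uniformly predictable: for every
`ε > 0` there is a real kernel `k̂ ∈ ℓ₂({1,2,...})` (here `k n` stands for `k̂(n+1)`) such that,
for every `x ∈ 𝒳` and `t ∈ ℤ`, the series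
`x̂(t) = e^{iω_I t} ∑_{s ≤ t−1} k̂(t−s) e^{−iω_I s} x(s)` (written with `s = t−1−n`, `n ∈ ℕ`)
converges absolutely and `|x(t) − x̂(t)| ≤ ε`. -/
theorem stmt_0 (I : Arc) (𝒳 : Set (ℤ → ℂ))
    (hBL : ∀ x ∈ 𝒳, BandLimited I.set x)
    (C : ℝ) (hbdd : ∀ x ∈ 𝒳, ∑' t : ℤ, ‖x t‖ ^ 2 ≤ C)
    (ε : ℝ) (hε : 0 < ε) :
    ∃ k : ℕ → ℝ, Summable (fun n => (k n) ^ 2) ∧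
      ∀ x ∈ 𝒳, ∀ t : ℤ,
        Summable (fun n : ℕ =>
          ‖((k n : ℝ) : ℂ) * Complex.exp (-Complex.I * (I.mid : ℂ) * ((t - 1 - (n : ℤ) : ℤ) : ℂ))
              * x (t - 1 - (n : ℤ))‖) ∧
        ‖x t - Complex.exp (Complex.I * (I.mid : ℂ) * (t : ℂ)) *
            ∑' n : ℕ, ((k n : ℝ) : ℂ)
              * Complex.exp (-Complex.I * (I.mid : ℂ) * ((t - 1 - (n : ℤ) : ℤ) : ℂ))
              * x (t - 1 - (n : ℤ))‖ ≤ ε := by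
  classical
  have h0 : 0 < I.halfLen := I.halfLen_pos
  have hπ : I.halfLen < π := I.halfLen_lt
  set s : ℝ := Real.sqrt C with hs
  have hs0 : 0 ≤ s := Real.sqrt_nonneg C
  set σ : ℝ := (s + 1)⁻¹ with hσ
  have hσ0 : 0 < σ := by positivity
  set δ : ℝ := ε / (s + 1) with hδdef
  have hδ0 : 0 < δ := by positivity
  obtain ⟨M, c, hczero, hcb⟩ := approx_main h0 hπ hδ0
  refine ⟨c, ?_, ?_⟩
  · apply summable_of_ne_finset_zero (s := Finset.range M)
    intro n hn
    rw [hczero n (by simpa using hn)]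
    norm_num
  intro x hx t
  have hC0 : 0 ≤ C := le_trans (tsum_nonneg (fun s => by positivity)) (hbdd x hx)
  have hss : s * s = C := Real.mul_self_sqrt hC0
  obtain ⟨hxL2, X₀, hX₀mem, hX₀supp, hX₀rep⟩ := hBL x hx
  set μ := volume.restrict (Set.Ioc (-π) π) with hμ
  haveI : IsFiniteMeasure μ :=
    ⟨by rw [hμ, Measure.restrict_apply_univ]; exact measure_Ioc_lt_top⟩
  have hsm := hX₀mem.1
  set X : ℝ → ℂ := hsm.mk X₀ with hX
  have hae : X₀ =ᵐ[μ] X := hsm.ae_eq_mk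
  have hXsm : StronglyMeasurable X := hsm.stronglyMeasurable_mk
  have hXmem : MemLp X 2 μ := hX₀mem.ae_eq hae
  have hXsupp : ∀ᵐ ω ∂μ, ω ∉ I.set → X ω = 0 := by
    filter_upwards [hX₀supp, hae] with ω h1 h2 h3
    rw [← h2]; exact h1 h3
  have hXrep : ∀ u : ℤ, x u = invZ X u := by
    intro u
    rw [hX₀rep u]
    unfold invZ
    congr 1
    exact integral_congr_ae (hae.mono fun ω hω => by simp only [hω])
  have hIntX : Integrable X μ := hXmem.integrable one_le_two
  -- vanishing of terms beyond M
  have hvan : ∀ n : ℕ, n ∉ Finset.range M →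
      ((c n : ℝ) : ℂ) * Complex.exp (-Complex.I * (I.mid : ℂ) * ((t - 1 - (n : ℤ) : ℤ) : ℂ))
        * x (t - 1 - (n : ℤ)) = 0 := by
    intro n hn
    rw [hczero n (by simpa using hn)]
    simp
  constructor
  · apply summable_of_ne_finset_zero (s := Finset.range M)
    intro n hn
    rw [hvan n hn, norm_zero]
  -- main estimate
  have htsum : (∑' n : ℕ, ((c n : ℝ) : ℂ)
        * Complex.exp (-Complex.I * (I.mid : ℂ) * ((t - 1 - (n : ℤ) : ℤ) : ℂ))
        * x (t - 1 - (n : ℤ)))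
      = ∑ n ∈ Finset.range M, ((c n : ℝ) : ℂ)
        * Complex.exp (-Complex.I * (I.mid : ℂ) * ((t - 1 - (n : ℤ) : ℤ) : ℂ))
        * x (t - 1 - (n : ℤ)) := tsum_eq_sum hvan
  rw [htsum]
  set c₀ : ℂ := ((1 / (2 * π) : ℝ) : ℂ) with hc₀
  set G : ℝ → ℂ := fun ω => X ω * Complex.exp (Complex.I * (ω : ℂ) * ((t : ℤ) : ℂ)) with hG
  set KK : ℝ → ℂ := fun ω => ∑ n ∈ Finset.range M,
    ((c n : ℝ) : ℂ) * Complex.exp (-Complex.I * ((n : ℂ) + 1) * ((ω : ℂ) - (I.mid : ℂ)))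
    with hKK
  -- integrability of the relevant functions
  have hexpsm : ∀ u : ℤ, AEStronglyMeasurable
      (fun ω : ℝ => Complex.exp (Complex.I * (ω : ℂ) * ((u : ℤ) : ℂ))) μ := by
    intro u
    exact (Complex.continuous_exp.comp
      ((continuous_const.mul Complex.continuous_ofReal).mul continuous_const)).aestronglyMeasurable
  have hexp1 : ∀ (u : ℤ) (ω : ℝ), ‖Complex.exp (Complex.I * (ω : ℂ) * ((u : ℤ) : ℂ))‖ = 1 := by
    intro u ω
    apply norm_exp_I_re_zero
    simp
  have hIntXu : ∀ u : ℤ, Integrable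
      (fun ω : ℝ => X ω * Complex.exp (Complex.I * (ω : ℂ) * ((u : ℤ) : ℂ))) μ := by
    intro u
    have h1 : Integrable
        (fun ω : ℝ => Complex.exp (Complex.I * (ω : ℂ) * ((u : ℤ) : ℂ)) * X ω) μ :=
      hIntX.bdd_mul (c := 1) (hexpsm u) (Filter.Eventually.of_forall fun ω => le_of_eq (hexp1 u ω))
    exact h1.congr (Filter.Eventually.of_forall fun ω => mul_comm _ _)
  have hIntG : Integrable G μ := hIntXu t
  have hIntgn : ∀ n : ℕ, Integrable (fun ω : ℝ =>
      ((c n : ℝ) : ℂ) * Complex.exp (-Complex.I * ((n : ℂ) + 1) * ((ω : ℂ) - (I.mid : ℂ)))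
        * G ω) μ := by
    intro n
    have hsm2 : AEStronglyMeasurable (fun ω : ℝ =>
        ((c n : ℝ) : ℂ) * Complex.exp (-Complex.I * ((n : ℂ) + 1) * ((ω : ℂ) - (I.mid : ℂ)))) μ :=
      (continuous_const.mul (Complex.continuous_exp.comp
        (continuous_const.mul (Complex.continuous_ofReal.sub continuous_const)))).aestronglyMeasurable
    have hbd : ∀ ω : ℝ, ‖((c n : ℝ) : ℂ)
        * Complex.exp (-Complex.I * ((n : ℂ) + 1) * ((ω : ℂ) - (I.mid : ℂ)))‖ ≤ |c n| := by
      intro ω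
      rw [norm_mul, Complex.norm_real, Real.norm_eq_abs, norm_exp_I_re_zero (by simp), mul_one]
    have := hIntG.bdd_mul hsm2 (Filter.Eventually.of_forall hbd)
    exact this.congr (Filter.Eventually.of_forall fun ω => by ring)
  have hIntKG : Integrable (fun ω => KK ω * G ω) μ := by
    have h1 := integrable_finset_sum (μ := μ) (Finset.range M) (fun n _ => hIntgn n)
    apply h1.congr
    apply Filter.Eventually.of_forall
    intro ω
    rw [hKK]
    dsimp only
    rw [Finset.sum_mul]
  -- each predictor term as an integral
  have hclaim : ∀ n : ℕ, Complex.exp (Complex.I * (I.mid : ℂ) * ((t : ℤ) : ℂ)) *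
      (((c n : ℝ) : ℂ) * Complex.exp (-Complex.I * (I.mid : ℂ) * ((t - 1 - (n : ℤ) : ℤ) : ℂ))
        * x (t - 1 - (n : ℤ)))
      = c₀ * ∫ ω in Set.Ioc (-π) π, ((c n : ℝ) : ℂ)
          * Complex.exp (-Complex.I * ((n : ℂ) + 1) * ((ω : ℂ) - (I.mid : ℂ))) * G ω := by
    intro n
    rw [hXrep (t - 1 - (n : ℤ))]
    unfold invZ
    rw [show Complex.exp (Complex.I * (I.mid : ℂ) * ((t : ℤ) : ℂ)) *
        (((c n : ℝ) : ℂ) * Complex.exp (-Complex.I * (I.mid : ℂ) * ((t - 1 - (n : ℤ) : ℤ) : ℂ))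
          * (((1 / (2 * π) : ℝ) : ℂ) * ∫ ω in Set.Ioc (-π) π,
              X ω * Complex.exp (Complex.I * (ω : ℂ) * (((t - 1 - (n : ℤ) : ℤ)) : ℂ))))
      = c₀ * ((Complex.exp (Complex.I * (I.mid : ℂ) * ((t : ℤ) : ℂ)) * (((c n : ℝ) : ℂ))
          * Complex.exp (-Complex.I * (I.mid : ℂ) * ((t - 1 - (n : ℤ) : ℤ) : ℂ)))
          * ∫ ω in Set.Ioc (-π) π,
              X ω * Complex.exp (Complex.I * (ω : ℂ) * (((t - 1 - (n : ℤ) : ℤ)) : ℂ)))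
      from by rw [hc₀]; ring]
    congr 1
    rw [← MeasureTheory.integral_const_mul]
    apply MeasureTheory.setIntegral_congr_fun measurableSet_Ioc
    intro ω hω
    dsimp only
    rw [show Complex.exp (Complex.I * (I.mid : ℂ) * ((t : ℤ) : ℂ)) * (((c n : ℝ) : ℂ))
          * Complex.exp (-Complex.I * (I.mid : ℂ) * ((t - 1 - (n : ℤ) : ℤ) : ℂ))
          * (X ω * Complex.exp (Complex.I * (ω : ℂ) * (((t - 1 - (n : ℤ) : ℤ)) : ℂ)))
        = (((c n : ℝ) : ℂ) * X ω) *
          (Complex.exp (Complex.I * (I.mid : ℂ) * ((t : ℤ) : ℂ))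
            * Complex.exp (-Complex.I * (I.mid : ℂ) * ((t - 1 - (n : ℤ) : ℤ) : ℂ))
            * Complex.exp (Complex.I * (ω : ℂ) * (((t - 1 - (n : ℤ) : ℤ)) : ℂ))) from by ring]
    rw [show ((c n : ℝ) : ℂ)
          * Complex.exp (-Complex.I * ((n : ℂ) + 1) * ((ω : ℂ) - (I.mid : ℂ))) * G ω
        = (((c n : ℝ) : ℂ) * X ω) *
          (Complex.exp (-Complex.I * ((n : ℂ) + 1) * ((ω : ℂ) - (I.mid : ℂ)))
            * Complex.exp (Complex.I * (ω : ℂ) * ((t : ℤ) : ℂ))) from by rw [hG]; ring]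
    congr 1
    rw [← Complex.exp_add, ← Complex.exp_add, ← Complex.exp_add]
    congr 1
    push_cast
    ring
  -- the error as a single integral
  have herr : x t - Complex.exp (Complex.I * (I.mid : ℂ) * ((t : ℤ) : ℂ)) *
      ∑ n ∈ Finset.range M, ((c n : ℝ) : ℂ)
        * Complex.exp (-Complex.I * (I.mid : ℂ) * ((t - 1 - (n : ℤ) : ℤ) : ℂ))
        * x (t - 1 - (n : ℤ))
      = c₀ * ∫ ω in Set.Ioc (-π) π, (1 - KK ω) * G ω := by
    rw [Finset.mul_sum]
    rw [Finset.sum_congr rfl (fun n _ => hclaim n)]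
    rw [← Finset.mul_sum]
    rw [← MeasureTheory.integral_finset_sum _ (fun n _ => hIntgn n)]
    rw [hXrep t]
    unfold invZ
    rw [← hc₀]
    rw [← mul_sub]
    congr 1
    rw [← MeasureTheory.integral_sub (hIntXu t) (by
      apply (integrable_finset_sum (μ := μ) (Finset.range M) (fun n _ => hIntgn n)).congr
      exact Filter.Eventually.of_forall fun ω => rfl)]
    apply MeasureTheory.setIntegral_congr_fun measurableSet_Ioc
    intro ω hω
    dsimp only
    rw [hKK, hG]
    dsimp only
    rw [sub_mul, one_mul, Finset.sum_mul]
  rw [herr]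
  -- bound on 1 - KK on the spectrum
  have hKb : ∀ ω : ℝ, ω ∈ I.set → ‖1 - KK ω‖ ≤ δ := by
    intro ω hω
    obtain ⟨-, k, hk⟩ := hω
    set θ := ω - I.mid + 2 * π * (k : ℝ) with hθdef
    have hθ : |θ| ≤ I.halfLen := le_of_lt hk
    have hKθ : KK ω = ∑ n ∈ Finset.range M, ((c n : ℝ) : ℂ) *
        Complex.exp (-Complex.I * ((n : ℂ) + 1) * (θ : ℂ)) := by
      rw [hKK]
      apply Finset.sum_congr rfl
      intro n _
      congr 1
      rw [show -Complex.I * ((n : ℂ) + 1) * ((ω : ℂ) - (I.mid : ℂ))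
          = -Complex.I * ((n : ℂ) + 1) * (θ : ℂ)
            + (((n : ℤ) + 1) * k : ℤ) * (2 * π * Complex.I) from by
        rw [hθdef]; push_cast; ring]
      rw [Complex.exp_add, Complex.exp_int_mul_two_pi_mul_I, mul_one]
    rw [hKθ]
    exact hcb θ hθ
  -- norm estimate
  have hnorm1 : ‖c₀ * ∫ ω in Set.Ioc (-π) π, (1 - KK ω) * G ω‖
      ≤ (1 / (2 * π)) * ∫ ω in Set.Ioc (-π) π, ‖(1 - KK ω) * G ω‖ := by
    have hc₀norm : ‖c₀‖ = 1 / (2 * π) := by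
      rw [hc₀, Complex.norm_real, Real.norm_eq_abs, _root_.abs_of_nonneg (by positivity)]
    rw [norm_mul, hc₀norm]
    exact mul_le_mul_of_nonneg_left (norm_integral_le_integral_norm _) (by positivity)
  have hptbd : ∀ᵐ ω ∂μ, ‖(1 - KK ω) * G ω‖ ≤ δ * ‖X ω‖ := by
    filter_upwards [hXsupp] with ω hsupp
    by_cases hmem : ω ∈ I.set
    · rw [hG]
      dsimp only
      rw [norm_mul, norm_mul, hexp1 t ω, mul_one]
      exact mul_le_mul_of_nonneg_right (hKb ω hmem) (norm_nonneg _)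
    · rw [hG]
      dsimp only
      rw [hsupp hmem]
      simp
  have hIntLHS : Integrable (fun ω => ‖(1 - KK ω) * G ω‖) μ := by
    apply Integrable.norm
    have : Integrable (fun ω => G ω - KK ω * G ω) μ := hIntG.sub hIntKG
    apply this.congr
    exact Filter.Eventually.of_forall fun ω => by ring
  have hIntRHS : Integrable (fun ω => δ * ‖X ω‖) μ := hIntX.norm.const_mul δ
  have hnorm2 : (∫ ω in Set.Ioc (-π) π, ‖(1 - KK ω) * G ω‖)
      ≤ ∫ ω in Set.Ioc (-π) π, δ * ‖X ω‖ :=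
    MeasureTheory.integral_mono_ae hIntLHS hIntRHS hptbd
  have hnorm3 : (∫ ω in Set.Ioc (-π) π, δ * ‖X ω‖)
      = δ * ∫ ω in Set.Ioc (-π) π, ‖X ω‖ := by
    rw [MeasureTheory.integral_const_mul]
  -- AM-GM bound for the L¹ norm
  have hsq : Integrable (fun ω => ‖X ω‖ ^ 2) μ := hXmem.norm.integrable_sq
  have hmuuniv : (μ Set.univ).toReal = 2 * π := by
    rw [hμ, Measure.restrict_apply_univ, Real.volume_Ioc, ENNReal.toReal_ofReal (by linarith)]
    ring
  have hAM : (∫ ω in Set.Ioc (-π) π, ‖X ω‖)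
      ≤ (σ * (∫ ω in Set.Ioc (-π) π, ‖X ω‖ ^ 2) + σ⁻¹ * (2 * π)) / 2 := by
    have hptw : ∀ ω : ℝ, ‖X ω‖ ≤ (σ * ‖X ω‖ ^ 2 + σ⁻¹) / 2 := by
      intro ω
      have hσinv : σ * σ⁻¹ = 1 := mul_inv_cancel₀ hσ0.ne'
      nlinarith [sq_nonneg (σ * ‖X ω‖ - 1), norm_nonneg (X ω), hσ0]
    have h1 : (∫ ω in Set.Ioc (-π) π, ‖X ω‖)
        ≤ ∫ ω in Set.Ioc (-π) π, (σ * ‖X ω‖ ^ 2 + σ⁻¹) / 2 := by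
      apply MeasureTheory.integral_mono hIntX.norm _ hptw
      exact ((hsq.const_mul σ).add (integrable_const σ⁻¹)).div_const 2
    calc (∫ ω in Set.Ioc (-π) π, ‖X ω‖)
        ≤ ∫ ω in Set.Ioc (-π) π, (σ * ‖X ω‖ ^ 2 + σ⁻¹) / 2 := h1
      _ = ((∫ ω in Set.Ioc (-π) π, σ * ‖X ω‖ ^ 2) + ∫ ω in Set.Ioc (-π) π, (σ⁻¹ : ℝ)) / 2 := by
          rw [← MeasureTheory.integral_add (hsq.const_mul σ) (integrable_const σ⁻¹)]
          rw [MeasureTheory.integral_div]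
      _ = (σ * (∫ ω in Set.Ioc (-π) π, ‖X ω‖ ^ 2) + σ⁻¹ * (2 * π)) / 2 := by
          rw [MeasureTheory.integral_const_mul, MeasureTheory.integral_const, measureReal_def, ← hμ, hmuuniv,
            smul_eq_mul, mul_comm (2 * π) σ⁻¹]
  -- Parseval bound for ∫ ‖X‖²
  have hpar : (∫ ω in Set.Ioc (-π) π, ‖X ω‖ ^ 2) = (2 * π) * ∑' u : ℤ, ‖x u‖ ^ 2 := by
    rw [parseval_bound X hXsm hXmem]
    congr 1
    exact tsum_congr fun u => by rw [hXrep u]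
  have hXC : (∫ ω in Set.Ioc (-π) π, ‖X ω‖ ^ 2) ≤ (2 * π) * C := by
    rw [hpar]
    exact mul_le_mul_of_nonneg_left (hbdd x hx) (by positivity)
  -- final numeric chain
  have hintXnonneg : 0 ≤ ∫ ω in Set.Ioc (-π) π, ‖X ω‖ :=
    MeasureTheory.integral_nonneg fun ω => norm_nonneg _
  calc ‖c₀ * ∫ ω in Set.Ioc (-π) π, (1 - KK ω) * G ω‖
      ≤ (1 / (2 * π)) * ∫ ω in Set.Ioc (-π) π, ‖(1 - KK ω) * G ω‖ := hnorm1
    _ ≤ (1 / (2 * π)) * (δ * ∫ ω in Set.Ioc (-π) π, ‖X ω‖) := by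
        apply mul_le_mul_of_nonneg_left _ (by positivity)
        rw [← hnorm3]; exact hnorm2
    _ ≤ (1 / (2 * π)) * (δ * ((σ * ((2 * π) * C) + σ⁻¹ * (2 * π)) / 2)) := by
        apply mul_le_mul_of_nonneg_left _ (by positivity)
        apply mul_le_mul_of_nonneg_left _ hδ0.le
        calc (∫ ω in Set.Ioc (-π) π, ‖X ω‖)
            ≤ (σ * (∫ ω in Set.Ioc (-π) π, ‖X ω‖ ^ 2) + σ⁻¹ * (2 * π)) / 2 := hAM
          _ ≤ (σ * ((2 * π) * C) + σ⁻¹ * (2 * π)) / 2 := by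
              have h2 := mul_le_mul_of_nonneg_left hXC hσ0.le
              linarith
    _ ≤ ε := by
        have hs1 : (0:ℝ) < s + 1 := by linarith
        have hπ0 : (0:ℝ) < π := Real.pi_pos
        rw [hδdef, hσ, inv_inv]
        have key : (1 / (2 * π)) * (ε / (s + 1) * (((s + 1)⁻¹ * (2 * π * C) + (s + 1) * (2 * π)) / 2))
            = ε * ((C + (s + 1) * (s + 1)) / (2 * (s + 1) * (s + 1))) := by
          field_simp
        rw [key]
        have hfrac : (C + (s + 1) * (s + 1)) / (2 * (s + 1) * (s + 1)) ≤ 1 := by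
          rw [div_le_one (by positivity)]
          nlinarith
        calc ε * ((C + (s + 1) * (s + 1)) / (2 * (s + 1) * (s + 1)))
            ≤ ε * 1 := mul_le_mul_of_nonneg_left hfrac hε.le
          _ = ε := mul_one ε
end
end

section
/- Let J₁ ⊂ J be such that sup_{I ∈ J₁} mes(I) < 2π, and let 𝒳 ⊂ ∪_{I ∈ J₁} ℓ₂^{BL}(I) be a set bounded in ℓ₂. Then for every ε > 0 there exists a single real-valued sequence k̂ ∈ ℓ₂({1,2,3,...}) such that for every x ∈ 𝒳, every I ∈ J₁ with x ∈ ℓ₂^{BL}(I), and every t ∈ ℤ, the series x̂(t) = e^{iω_I t} ∑_{s ≤ t−1} k̂(t−s) e^{−iω_I s} x(s) converges absolutely and |x(t) − x̂(t)| ≤ ε. -/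
open MeasureTheory Complex Real Set Filter

noncomputable section

namespace Stmt1Aux

open Polynomial

lemma wdist {a u φ : ℝ} (ha : a < π) (hφ : |φ| ≤ a) (hu : u ≤ 0) :
    Real.sin a ≤ ‖Complex.exp (-(Complex.I * (φ:ℂ))) - (u : ℂ)‖ := by
  have ha0 : 0 ≤ a := le_trans (abs_nonneg φ) hφ
  have hcos : Real.cos a ≤ Real.cos φ := by
    rw [← Real.cos_abs φ]
    exact Real.cos_le_cos_of_nonneg_of_le_pi (abs_nonneg φ) ha.le hφ
  have hz : Complex.exp (-(Complex.I * (φ:ℂ))) - (u:ℂ) =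
      Complex.mk (Real.cos φ - u) (-Real.sin φ) := by
    have : -(Complex.I * (φ:ℂ)) = ((-φ : ℝ) : ℂ) * Complex.I := by push_cast; ring
    rw [this, Complex.exp_mul_I]
    apply Complex.ext <;>
      simp [Complex.cos_ofReal_re, Complex.sin_ofReal_re, Real.cos_neg, Real.sin_neg]
  have hnormsq : ‖Complex.exp (-(Complex.I * (φ:ℂ))) - (u:ℂ)‖ ^ 2
      = (Real.cos φ - u) ^ 2 + (Real.sin φ) ^ 2 := by
    rw [hz]
    rw [← Complex.normSq_eq_norm_sq]
    simp [Complex.normSq_mk]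
    ring
  have key : (Real.sin a) ^ 2 ≤ ‖Complex.exp (-(Complex.I * (φ:ℂ))) - (u:ℂ)‖ ^ 2 := by
    rw [hnormsq]
    have h1 : (Real.cos φ - u) ^ 2 + (Real.sin φ) ^ 2 = 1 - 2 * u * Real.cos φ + u ^ 2 := by
      have := Real.sin_sq_add_cos_sq φ
      nlinarith [this]
    have h2 : (Real.sin a) ^ 2 = 1 - (Real.cos a) ^ 2 := by
      have := Real.sin_sq_add_cos_sq a
      nlinarith
    nlinarith [sq_nonneg (u - Real.cos a)]
  have hn : 0 ≤ ‖Complex.exp (-(Complex.I * (φ:ℂ))) - (u:ℂ)‖ := norm_nonneg _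
  nlinarith [Real.sin_nonneg_of_nonneg_of_le_pi ha0 ha.le]


def goodAt (a u : ℝ) : Prop :=
  ∀ ε : ℝ, 0 < ε → ∃ p : Polynomial ℝ, ∀ φ : ℝ, |φ| ≤ a →
    ‖(p.map (algebraMap ℝ ℂ)).eval (Complex.exp (-(Complex.I * (φ:ℂ)))) -
        (Complex.exp (-(Complex.I * (φ:ℂ))) - (u:ℂ))⁻¹‖ ≤ ε



lemma norm_w (φ : ℝ) : ‖Complex.exp (-(Complex.I * (φ : ℂ)))‖ = 1 := by
  have : -(Complex.I * (φ:ℂ)) = ((-φ : ℝ) : ℂ) * Complex.I := by push_cast; ring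
  rw [this]
  simpa using Complex.norm_exp_ofReal_mul_I (-φ)



lemma goodAt_of_le {a u : ℝ} (hu : u ≤ -2) : goodAt a u := by
  intro ε hε
  obtain ⟨n, hn⟩ : ∃ n : ℕ, (1/2 : ℝ)^n < ε :=
    exists_pow_lt_of_lt_one hε (by norm_num)
  refine ⟨∑ m ∈ Finset.range n, Polynomial.C (-(u⁻¹)^(m+1)) * Polynomial.X ^ m, fun φ hφ => ?_⟩
  set w : ℂ := Complex.exp (-(Complex.I * (φ:ℂ))) with hw
  have hwn : ‖w‖ = 1 := norm_w φ
  have hun : ‖(u:ℂ)‖ = -u := by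
    rw [Complex.norm_real, Real.norm_eq_abs, abs_of_nonpos (by linarith)]
  have hu2 : (2:ℝ) ≤ ‖(u:ℂ)‖ := by rw [hun]; linarith
  have hu0 : (u:ℂ) ≠ 0 := by
    intro h; rw [h] at hu2; simp at hu2; linarith
  have hwu : (1:ℝ) ≤ ‖w - (u:ℂ)‖ := by
    calc (1:ℝ) = ‖(u:ℂ)‖ - 1 - (‖(u:ℂ)‖ - 2) := by ring
    _ ≤ ‖(u:ℂ)‖ - ‖w‖ - 0 := by rw [hwn]; linarith
    _ ≤ ‖(u:ℂ) - w‖ := by rw [sub_zero]; exact norm_sub_norm_le _ _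
    _ = ‖w - (u:ℂ)‖ := norm_sub_rev _ _
  have hwu0 : w - (u:ℂ) ≠ 0 := by
    intro h; rw [h] at hwu; simp at hwu; linarith
  have hrn : ‖w * (u:ℂ)⁻¹‖ ≤ 1/2 := by
    rw [norm_mul, hwn, one_mul, norm_inv]
    rw [inv_le_comm₀ (by linarith) (by norm_num)]
    linarith
  have hr1 : w * (u:ℂ)⁻¹ ≠ 1 := by
    intro h
    have : ‖w * (u:ℂ)⁻¹‖ = 1 := by rw [h]; simp
    rw [this] at hrn; linarith
  -- evaluate the polynomial
  have heval : ((∑ m ∈ Finset.range n, Polynomial.C (-(u⁻¹)^(m+1)) * Polynomial.X ^ m).map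
      (algebraMap ℝ ℂ)).eval w = ∑ m ∈ Finset.range n, -((u:ℂ)⁻¹)^(m+1) * w^m := by
    simp [Polynomial.eval_finset_sum]
  rw [heval]
  have hsum : ∑ m ∈ Finset.range n, -((u:ℂ)⁻¹)^(m+1) * w^m
      = -((u:ℂ)⁻¹) * (((w * (u:ℂ)⁻¹)^n - 1) / (w * (u:ℂ)⁻¹ - 1)) := by
    rw [← geom_sum_eq hr1 n, Finset.mul_sum]
    apply Finset.sum_congr rfl
    intro m _
    rw [mul_pow]; ring
  rw [hsum]
  have hkey : -((u:ℂ)⁻¹) * (((w * (u:ℂ)⁻¹)^n - 1) / (w * (u:ℂ)⁻¹ - 1)) - (w - (u:ℂ))⁻¹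
      = -(w * (u:ℂ)⁻¹)^n * (w - (u:ℂ))⁻¹ := by
    have h1 : w * (u:ℂ)⁻¹ - 1 ≠ 0 := sub_ne_zero.mpr hr1
    field_simp [hu0, hwu0, h1]
    ring
  rw [hkey]
  have : ‖-(w * (u:ℂ)⁻¹)^n * (w - (u:ℂ))⁻¹‖ ≤ (1/2:ℝ)^n * 1 := by
    rw [norm_mul, norm_neg, norm_pow, norm_inv]
    refine mul_le_mul (pow_le_pow_left₀ (norm_nonneg _) hrn n) ?_ (by positivity) (by positivity)
    rw [inv_le_one_iff₀]
    right; exact hwu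
  linarith


lemma goodAt_step {a : ℝ} (h0 : 0 < a) (ha : a < π) {u : ℝ}
    (hu' : u + Real.sin a / 4 ≤ 0) (hgood : goodAt a u) : goodAt a (u + Real.sin a / 4) := by
  set s : ℝ := Real.sin a with hs
  have hs0 : 0 < s := Real.sin_pos_of_pos_of_lt_pi h0 ha
  have hs1 : s ≤ 1 := Real.sin_le_one a
  set h : ℝ := s / 4 with hh
  have hu : u ≤ 0 := by linarith
  intro ε hε
  -- choose M with (2/s) * (1/2)^(M) ≤ ε/2
  obtain ⟨M, hM⟩ : ∃ M : ℕ, (1/2 : ℝ)^M < ε * s / 4 := by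
    refine exists_pow_lt_of_lt_one (by positivity) (by norm_num)
  have hM' : (2/s) * (1/2:ℝ)^M ≤ ε / 2 := by
    rw [div_mul_eq_mul_div, div_le_div_iff₀ hs0 (by norm_num)] at *
    nlinarith
  set ε₁ : ℝ := min (3*ε/16) (1/s) with hε₁def
  have hε₁0 : 0 < ε₁ := lt_min (by linarith) (by positivity)
  have hε₁a : ε₁ ≤ 3*ε/16 := min_le_left _ _
  have hε₁b : ε₁ ≤ 1/s := min_le_right _ _
  obtain ⟨p, hp⟩ := hgood ε₁ hε₁0
  refine ⟨p * ∑ m ∈ Finset.range (M+1), (Polynomial.C h * p)^m, fun φ hφ => ?_⟩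
  set w : ℂ := Complex.exp (-(Complex.I * (φ:ℂ))) with hwdef
  set P : ℂ := (p.map (algebraMap ℝ ℂ)).eval w with hPdef
  set A : ℂ := (w - (u:ℂ))⁻¹ with hAdef
  have dwu : s ≤ ‖w - (u:ℂ)‖ := wdist ha hφ hu
  have dwu' : s ≤ ‖w - ((u+h:ℝ):ℂ)‖ := wdist ha hφ hu'
  have hwu0 : w - (u:ℂ) ≠ 0 := by
    intro hx; rw [hx] at dwu; simp at dwu; linarith
  have hwu'0 : w - ((u+h:ℝ):ℂ) ≠ 0 := by
    intro hx; rw [hx] at dwu'; simp at dwu'; linarith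
  have hA : ‖A‖ ≤ 1/s := by
    rw [hAdef, norm_inv, one_div]
    exact inv_anti₀ hs0 dwu
  have hPA : ‖P - A‖ ≤ ε₁ := hp φ hφ
  have hP : ‖P‖ ≤ 2/s := by
    calc ‖P‖ = ‖(P - A) + A‖ := by ring_nf
    _ ≤ ‖P - A‖ + ‖A‖ := norm_add_le _ _
    _ ≤ 1/s + 1/s := by
        refine add_le_add (le_trans hPA hε₁b) hA
    _ = 2/s := by ring
  have hhP : ‖(h:ℂ) * P‖ ≤ 1/2 := by
    rw [norm_mul, Complex.norm_real, Real.norm_eq_abs, abs_of_pos (by positivity)]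
    calc h * ‖P‖ ≤ (s/4) * (2/s) := by
          apply mul_le_mul le_rfl hP (norm_nonneg _) (by positivity)
    _ = 1/2 := by field_simp; ring
  have hhA : ‖(h:ℂ) * A‖ ≤ 1/4 := by
    rw [norm_mul, Complex.norm_real, Real.norm_eq_abs, abs_of_pos (by positivity)]
    calc h * ‖A‖ ≤ (s/4) * (1/s) := by
          apply mul_le_mul le_rfl hA (norm_nonneg _) (by positivity)
    _ = 1/4 := by field_simp
  have h1hP : 1/2 ≤ ‖1 - (h:ℂ)*P‖ := by
    have := norm_sub_norm_le (1:ℂ) ((h:ℂ)*P)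
    rw [norm_one] at this
    linarith
  have h1hA : 3/4 ≤ ‖1 - (h:ℂ)*A‖ := by
    have := norm_sub_norm_le (1:ℂ) ((h:ℂ)*A)
    rw [norm_one] at this
    linarith
  have ne1 : (1:ℂ) - (h:ℂ)*P ≠ 0 := by
    intro hx; rw [hx] at h1hP; simp at h1hP; linarith
  have ne2 : (1:ℂ) - (h:ℂ)*A ≠ 0 := by
    intro hx; rw [hx] at h1hA; simp at h1hA; linarith
  have hPne1 : (h:ℂ) * P ≠ 1 := by
    intro hx
    have : ‖(h:ℂ)*P‖ = 1 := by rw [hx, norm_one]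
    linarith
  -- B = A / (1 - h A)
  have hcast : ((u+h:ℝ):ℂ) = (u:ℂ) + (h:ℂ) := by push_cast; rfl
  have hw2 : w - ((u:ℂ) + (h:ℂ)) ≠ 0 := by rw [← hcast]; exact hwu'0
  have hB : (w - ((u+h:ℝ):ℂ))⁻¹ = A / (1 - (h:ℂ)*A) := by
    rw [hcast, eq_div_iff ne2, hAdef]
    field_simp [hwu0, hw2]
    ring
  -- evaluation of q
  have hQ : ((p * ∑ m ∈ Finset.range (M+1), (Polynomial.C h * p)^m).map
        (algebraMap ℝ ℂ)).eval w = P * ∑ m ∈ Finset.range (M+1), ((h:ℂ)*P)^m := by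
    simp only [Polynomial.map_mul, Polynomial.map_sum, Polynomial.map_pow, Polynomial.map_C,
      Polynomial.eval_mul, Polynomial.eval_finset_sum, Polynomial.eval_pow, Polynomial.eval_mul,
      Polynomial.eval_C, hPdef]
    norm_num
  rw [hQ, hB]
  have hgeom : ∑ m ∈ Finset.range (M+1), ((h:ℂ)*P)^m
      = (((h:ℂ)*P)^(M+1) - 1) / ((h:ℂ)*P - 1) := geom_sum_eq hPne1 (M+1)
  rw [hgeom]
  -- split the error
  have hsplit : ∀ Q B z : ℂ, (1:ℂ) - z*Q ≠ 0 → (1:ℂ) - z*B ≠ 0 →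
      Q * (((z*Q)^(M+1) - 1) / (z*Q - 1)) - B / (1 - z*B)
      = (Q / (1 - z*Q) - B / (1 - z*B)) - Q * (z*Q)^(M+1) / (1 - z*Q) := by
    intro Q B z n1 n2
    have n1' : z*Q - 1 ≠ 0 := fun hx => n1 (by linear_combination -hx)
    rw [← neg_div_neg_eq ((z*Q)^(M+1) - 1) (z*Q - 1), neg_sub, neg_sub]
    ring
  have hsplit := hsplit P A (h:ℂ) ne1 ne2
  rw [hsplit]
  have hE1 : ‖P / (1 - (h:ℂ)*P) - A / (1 - (h:ℂ)*A)‖ ≤ ε/2 := by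
    have hid : ∀ Q B z : ℂ, (1:ℂ) - z*Q ≠ 0 → (1:ℂ) - z*B ≠ 0 →
        Q / (1 - z*Q) - B / (1 - z*B) = (Q - B) / ((1 - z*Q) * (1 - z*B)) := by
      intro Q B z n1 n2
      rw [div_sub_div _ _ n1 n2]
      congr 1
      ring
    have hid := hid P A (h:ℂ) ne1 ne2
    rw [hid, norm_div, norm_mul]
    calc ‖P - A‖ / (‖1 - (h:ℂ)*P‖ * ‖1 - (h:ℂ)*A‖) ≤ ε₁ / ((1/2) * (3/4)) := by
          apply div_le_div₀ hε₁0.le hPA (by norm_num)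
          exact mul_le_mul h1hP h1hA (by norm_num) (norm_nonneg _)
    _ = (8/3) * ε₁ := by ring
    _ ≤ (8/3) * (3*ε/16) := by linarith
    _ = ε/2 := by ring
  have hE2 : ‖P * ((h:ℂ)*P)^(M+1) / (1 - (h:ℂ)*P)‖ ≤ ε/2 := by
    rw [norm_div, norm_mul, norm_pow]
    calc ‖P‖ * ‖(h:ℂ)*P‖^(M+1) / ‖1 - (h:ℂ)*P‖ ≤ (2/s) * (1/2)^(M+1) / (1/2) := by
          apply div_le_div₀ (by positivity) ?_ (by norm_num) h1hP
          exact mul_le_mul hP (pow_le_pow_left₀ (norm_nonneg _) hhP _) (by positivity) (by positivity)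
    _ = (2/s) * (1/2)^M := by ring
    _ ≤ ε/2 := hM'
  calc ‖(P / (1 - (h:ℂ)*P) - A / (1 - (h:ℂ)*A)) - P * ((h:ℂ)*P)^(M+1) / (1 - (h:ℂ)*P)‖
      ≤ ‖P / (1 - (h:ℂ)*P) - A / (1 - (h:ℂ)*A)‖ + ‖P * ((h:ℂ)*P)^(M+1) / (1 - (h:ℂ)*P)‖ :=
        norm_sub_le _ _
  _ ≤ ε/2 + ε/2 := add_le_add hE1 hE2
  _ = ε := by ring


lemma goodAt_zero {a : ℝ} (h0 : 0 < a) (ha : a < π) : goodAt a 0 := by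
  set s : ℝ := Real.sin a with hs
  have hs0 : 0 < s := Real.sin_pos_of_pos_of_lt_pi h0 ha
  set h : ℝ := s / 4 with hh
  have hh0 : 0 < h := by positivity
  set N : ℕ := ⌈(2:ℝ)/h⌉₊ with hN
  have hNh : 2 ≤ (N:ℝ) * h := by
    have := Nat.le_ceil ((2:ℝ)/h)
    rw [div_le_iff₀ hh0] at this
    exact this
  have key : ∀ m : ℕ, m ≤ N → goodAt a (-(N:ℝ)*h + m*h) := by
    intro m
    induction m with
    | zero =>
      intro _
      apply goodAt_of_le
      simp only [Nat.cast_zero, zero_mul, add_zero]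
      linarith
    | succ m ih =>
      intro hm
      have hmN : m ≤ N := by omega
      have step := goodAt_step h0 ha (u := -(N:ℝ)*h + m*h) ?_ (ih hmN)
      · have : -(N:ℝ)*h + m*h + Real.sin a / 4 = -(N:ℝ)*h + (m+1 : ℕ)*h := by
          rw [← hs, ← hh]; push_cast; ring
        rwa [this] at step
      · rw [← hs, ← hh]
        have : (m:ℝ) + 1 ≤ N := by exact_mod_cast hm
        nlinarith
  have := key N le_rfl
  have h0' : -(N:ℝ)*h + N*h = 0 := by ring
  rwa [h0'] at this



lemma approx1 {a : ℝ} (h0 : 0 < a) (ha : a < π) {δ : ℝ} (hδ : 0 < δ) :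
    ∃ p : Polynomial ℝ, ∀ φ : ℝ, |φ| ≤ a →
      ‖1 - Complex.exp (-(Complex.I * (φ:ℂ))) *
          (p.map (algebraMap ℝ ℂ)).eval (Complex.exp (-(Complex.I * (φ:ℂ))))‖ ≤ δ := by
  obtain ⟨p, hp⟩ := goodAt_zero h0 ha δ hδ
  refine ⟨p, fun φ hφ => ?_⟩
  set w : ℂ := Complex.exp (-(Complex.I * (φ:ℂ))) with hwdef
  have hw0 : w ≠ 0 := Complex.exp_ne_zero _
  have hp := hp φ hφ
  rw [Complex.ofReal_zero, sub_zero] at hp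
  have hid : 1 - w * (p.map (algebraMap ℝ ℂ)).eval w
      = -(w * ((p.map (algebraMap ℝ ℂ)).eval w - w⁻¹)) := by
    field_simp
    ring
  rw [hid, norm_neg, norm_mul]
  have : ‖w‖ = 1 := by
    have : -(Complex.I * (φ:ℂ)) = ((-φ : ℝ) : ℂ) * Complex.I := by push_cast; ring
    rw [hwdef, this]
    simpa using Complex.norm_exp_ofReal_mul_I (-φ)
  rw [this, one_mul]
  exact hp


lemma parseval_meas (X : ℝ → ℂ) (hXm : StronglyMeasurable X)
    (hX : MemLp X 2 (volume.restrict (Set.Ioc (-π) π))) :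
    ∫ ω in Set.Ioc (-π) π, ‖X ω‖ ^ 2 = (2 * π) * ∑' t : ℤ, ‖invZ X t‖ ^ 2 := by
  haveI : Fact (0 < 2 * π) := ⟨Real.two_pi_pos⟩
  have hI : Set.Ioc (-π) (-π + 2*π) = Set.Ioc (-π) π := by rw [show -π + 2*π = π by ring]
  set F : AddCircle (2*π) → ℂ := AddCircle.liftIoc (2*π) (-π) X with hF
  have hFm : Measurable F := by
    exact hXm.measurable.comp
      (measurable_subtype_coe.comp (AddCircle.measurableEquivIoc (2*π) (-π)).measurable)
  have hmk := AddCircle.measurePreserving_mk (2*π) (-π)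
  have hae : (fun ω : ℝ => F ↑ω) =ᵐ[volume.restrict (Set.Ioc (-π) π)] X := by
    refine Filter.eventuallyEq_of_mem (self_mem_ae_restrict measurableSet_Ioc) fun ω hω => ?_
    exact AddCircle.liftIoc_coe_apply (by rwa [hI])
  have hXcomp : MemLp (fun ω : ℝ => F ↑ω) 2 (volume.restrict (Set.Ioc (-π) π)) :=
    hX.ae_eq hae.symm
  have hFv : MemLp F 2 (volume : Measure (AddCircle (2*π))) := by
    rw [← hmk.map_eq]
    refine (memLp_map_measure_iff hFm.aestronglyMeasurable hmk.measurable.aemeasurable).2 ?_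
    rw [hI]
    exact hXcomp
  have h2π0 : ENNReal.ofReal (2*π) ≠ 0 := by
    simp [ENNReal.ofReal_eq_zero]
    positivity
  have hFh : MemLp F 2 (AddCircle.haarAddCircle (T := 2*π)) := by
    have := hFv.smul_measure (c := (ENNReal.ofReal (2*π))⁻¹) (by simp [h2π0]; positivity)
    rwa [AddCircle.volume_eq_smul_haarAddCircle, smul_smul,
      ENNReal.inv_mul_cancel h2π0 ENNReal.ofReal_ne_top, one_smul] at this
  set f := hFh.toLp F with hfdef
  have hfF : ⇑f =ᵐ[AddCircle.haarAddCircle (T := 2*π)] F := hFh.coeFn_toLp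
  have hcoeff : ∀ n : ℤ, fourierCoeff (⇑f) n = fourierCoeff F n := by
    intro n
    unfold fourierCoeff
    exact integral_congr_ae (hfF.mono fun x hx => by dsimp only; rw [hx])
  have hpars := tsum_sq_fourierCoeff f
  -- right-hand side
  have hR1 : ∫ z, ‖f z‖^2 ∂(AddCircle.haarAddCircle (T := 2*π))
      = ∫ z, ‖F z‖^2 ∂(AddCircle.haarAddCircle (T := 2*π)) :=
    integral_congr_ae (hfF.mono fun x hx => by dsimp only; rw [hx])
  have hvol := AddCircle.volume_eq_smul_haarAddCircle (T := 2*π)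
  have hR2 : ∫ z, ‖F z‖^2 ∂(volume : Measure (AddCircle (2*π)))
      = (2*π) * ∫ z, ‖F z‖^2 ∂(AddCircle.haarAddCircle (T := 2*π)) := by
    rw [hvol, integral_smul_measure, ENNReal.toReal_ofReal Real.two_pi_pos.le, smul_eq_mul]
  have hR3 : ∫ ω in Set.Ioc (-π) ((-π) + 2*π), ‖F ↑ω‖^2
      = ∫ z, ‖F z‖^2 ∂(volume : Measure (AddCircle (2*π))) :=
    AddCircle.integral_preimage (2*π) (-π) (fun z => ‖F z‖^2)
  have hL : ∫ ω in Set.Ioc (-π) π, ‖X ω‖^2 = ∫ ω in Set.Ioc (-π) ((-π) + 2*π), ‖F ↑ω‖^2 := by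
    rw [hI]
    refine setIntegral_congr_fun measurableSet_Ioc fun ω hω => ?_
    rw [hF, AddCircle.liftIoc_coe_apply (by rwa [hI])]
  -- coefficients
  have hco : ∀ t : ℤ, invZ X t = fourierCoeff F (-t) := by
    intro t
    rw [fourierCoeff_eq_intervalIntegral F (-t) (-π), neg_neg,
      intervalIntegral.integral_of_le (by linarith [Real.two_pi_pos] : -π ≤ -π + 2*π)]
    have hint : ∫ ω in Set.Ioc (-π) ((-π)+2*π), (fourier t) (ω : AddCircle (2*π)) • F ↑ω
        = ∫ ω in Set.Ioc (-π) π, X ω * Complex.exp (Complex.I * (ω:ℂ) * (t:ℂ)) := by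
      rw [hI]
      refine setIntegral_congr_fun measurableSet_Ioc fun ω hω => ?_
      rw [hF, AddCircle.liftIoc_coe_apply (by rwa [hI]), fourier_coe_apply, smul_eq_mul]
      rw [mul_comm]
      congr 1
      congr 1
      have hπ : (π:ℂ) ≠ 0 := by
        simp only [ne_eq, Complex.ofReal_eq_zero]
        exact Real.pi_ne_zero
      push_cast
      field_simp
    rw [hint, invZ, Complex.real_smul]
  -- put everything together
  have hsum : ∑' t : ℤ, ‖invZ X t‖^2 = ∑' n : ℤ, ‖fourierCoeff F n‖^2 := by
    have := (Equiv.neg ℤ).tsum_eq (fun n : ℤ => ‖fourierCoeff F n‖^2)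
    rw [← this]
    congr 1
    ext t
    rw [hco t]
    rfl
  simp only [hcoeff] at hpars
  calc ∫ ω in Set.Ioc (-π) π, ‖X ω‖^2
      = ∫ ω in Set.Ioc (-π) ((-π) + 2*π), ‖F ↑ω‖^2 := hL
  _ = ∫ z, ‖F z‖^2 ∂(volume : Measure (AddCircle (2*π))) := hR3
  _ = (2*π) * ∫ z, ‖F z‖^2 ∂(AddCircle.haarAddCircle (T := 2*π)) := hR2
  _ = (2*π) * ∫ z, ‖f z‖^2 ∂(AddCircle.haarAddCircle (T := 2*π)) := by rw [hR1]
  _ = (2*π) * ∑' n : ℤ, ‖fourierCoeff F n‖^2 := by rw [← hpars]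
  _ = (2*π) * ∑' t : ℤ, ‖invZ X t‖^2 := by rw [hsum]


lemma parseval (X : ℝ → ℂ) (hX : MemLp X 2 (volume.restrict (Set.Ioc (-π) π))) :
    ∫ ω in Set.Ioc (-π) π, ‖X ω‖ ^ 2 = (2 * π) * ∑' t : ℤ, ‖invZ X t‖ ^ 2 := by
  have hm := hX.aestronglyMeasurable
  set Y : ℝ → ℂ := hm.mk X with hY
  have hYsm : StronglyMeasurable Y := hm.stronglyMeasurable_mk
  have hXY : X =ᵐ[volume.restrict (Set.Ioc (-π) π)] Y := hm.ae_eq_mk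
  have h1 : ∫ ω in Set.Ioc (-π) π, ‖X ω‖ ^ 2 = ∫ ω in Set.Ioc (-π) π, ‖Y ω‖ ^ 2 :=
    integral_congr_ae (hXY.mono fun ω hω => by dsimp only; rw [hω])
  have h2 : ∀ t : ℤ, invZ X t = invZ Y t := by
    intro t
    unfold invZ
    congr 1
    exact integral_congr_ae (hXY.mono fun ω hω => by dsimp only; rw [hω])
  simp only [h1, h2]
  exact parseval_meas Y hYsm (hX.ae_eq hXY)

end Stmt1Aux

open Stmt1Aux

set_option maxHeartbeats 2000000

/-- a single kernel `k̂ ∈ ℓ₂({1,2,...})` (here `k n` stands for `k̂(n+1)`) serves all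
`x` in a bounded set `𝒳 ⊂ ∪_{I ∈ 𝒥₁} ℓ₂^{BL}(I)`, where `sup_{I ∈ 𝒥₁} mes(I) < 2π`:
for every `x ∈ 𝒳`, every `I ∈ 𝒥₁` with `x ∈ ℓ₂^{BL}(I)` and every `t ∈ ℤ`, the series
`x̂(t) = e^{iω_I t} ∑_{s ≤ t−1} k̂(t−s) e^{−iω_I s} x(s)` (with `s = t−1−n`)
converges absolutely and `|x(t) − x̂(t)| ≤ ε`. -/
theorem stmt_1 (𝒥 : Set Arc) (c : ℝ) (hc : c < 2 * π)
    (hmes : ∀ I ∈ 𝒥, 2 * I.halfLen ≤ c)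
    (𝒳 : Set (ℤ → ℂ)) (hBL : ∀ x ∈ 𝒳, ∃ I ∈ 𝒥, BandLimited I.set x)
    (C : ℝ) (hbdd : ∀ x ∈ 𝒳, ∑' t : ℤ, ‖x t‖ ^ 2 ≤ C)
    (ε : ℝ) (hε : 0 < ε) :
    ∃ k : ℕ → ℝ, Summable (fun n => (k n) ^ 2) ∧
      ∀ x ∈ 𝒳, ∀ I ∈ 𝒥, BandLimited I.set x → ∀ t : ℤ,
        Summable (fun n : ℕ =>
          ‖((k n : ℝ) : ℂ) * Complex.exp (-Complex.I * (I.mid : ℂ) * ((t - 1 - (n : ℤ) : ℤ) : ℂ))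
              * x (t - 1 - (n : ℤ))‖) ∧
        ‖x t - Complex.exp (Complex.I * (I.mid : ℂ) * (t : ℂ)) *
            ∑' n : ℕ, ((k n : ℝ) : ℂ)
              * Complex.exp (-Complex.I * (I.mid : ℂ) * ((t - 1 - (n : ℤ) : ℤ) : ℂ))
              * x (t - 1 - (n : ℤ))‖ ≤ ε := by
  classical
  have hπ := Real.pi_pos
  set C' : ℝ := max C 0 with hC'def
  have hC'0 : (0:ℝ) ≤ C' := le_max_right _ _
  set a : ℝ := max (c/2) (π/2) with hadef
  have ha0 : 0 < a := lt_of_lt_of_le (by positivity) (le_max_right _ _)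
  have haπ : a < π := max_lt (by linarith) (by linarith)
  set δ : ℝ := ε / (C' + 1) with hδdef
  have hδ0 : 0 < δ := by positivity
  obtain ⟨p, hp⟩ := approx1 ha0 haπ hδ0
  set N : ℕ := p.natDegree with hNdef
  have hcoeff0 : ∀ n ∉ Finset.range (N+1), p.coeff n = 0 := by
    intro n hn
    apply Polynomial.coeff_eq_zero_of_natDegree_lt
    simpa [Nat.lt_succ_iff] using hn
  refine ⟨fun n => p.coeff n, ?_, ?_⟩
  · exact summable_of_ne_finset_zero (s := Finset.range (N+1))
      (fun n hn => by dsimp only; rw [hcoeff0 n hn]; ring)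
  intro x hx I hI hBLx t
  obtain ⟨hxl2, X, hX2, hXout, hXrep⟩ := hBLx
  haveI : IsFiniteMeasure (volume.restrict (Set.Ioc (-π) π)) := by
    constructor
    rw [Measure.restrict_apply_univ]
    exact measure_Ioc_lt_top
  -- notation
  set m : ℝ := I.mid with hmdef
  have hterm0 : ∀ n ∉ Finset.range (N+1),
      ((p.coeff n : ℝ) : ℂ) * Complex.exp (-Complex.I * (m:ℂ) * ((t - 1 - (n:ℤ) : ℤ):ℂ))
        * x (t - 1 - (n:ℤ)) = 0 := by
    intro n hn
    rw [hcoeff0 n hn]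
    simp
  constructor
  · exact summable_of_ne_finset_zero (s := Finset.range (N+1))
      (fun n hn => by dsimp only; rw [hterm0 n hn]; simp)
  -- helper: unit norm of imaginary exponentials
  have hnorm1 : ∀ u v : ℝ, ‖Complex.exp (Complex.I * (u:ℂ) * (v:ℂ))‖ = 1 := by
    intro u v
    rw [show Complex.I * (u:ℂ) * (v:ℂ) = ((u*v : ℝ):ℂ) * Complex.I by push_cast; ring]
    simpa using Complex.norm_exp_ofReal_mul_I (u*v)
  set pC : Polynomial ℂ := p.map (algebraMap ℝ ℂ) with hpCdef
  set W : ℝ → ℂ := fun ω => Complex.exp (-(Complex.I * ((ω - m : ℝ) : ℂ))) with hWdef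
  -- integrability
  have hXint : Integrable X (volume.restrict (Set.Ioc (-π) π)) :=
    hX2.integrable (by norm_num)
  have hintn : ∀ z : ℂ, ∀ s : ℤ, Integrable
      (fun ω : ℝ => z * (X ω * Complex.exp (Complex.I * (ω:ℂ) * (s:ℂ))))
      (volume.restrict (Set.Ioc (-π) π)) := by
    intro z s
    apply Integrable.const_mul
    have hb : Integrable (fun ω : ℝ => Complex.exp (Complex.I * (ω:ℂ) * (s:ℂ)) * X ω)
        (volume.restrict (Set.Ioc (-π) π)) := by
      refine hXint.bdd_mul (c := 1) ?_ (Filter.Eventually.of_forall fun ω => le_of_eq (hnorm1 ω s))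
      exact (Continuous.aestronglyMeasurable (by continuity))
    exact hb.congr (Filter.EventuallyEq.of_eq (funext fun ω => mul_comm _ _))
  have hXexp_int : Integrable (fun ω : ℝ => X ω * Complex.exp (Complex.I * (ω:ℂ) * (t:ℂ)))
      (volume.restrict (Set.Ioc (-π) π)) := by
    simpa using hintn 1 t
  have hsum_int : Integrable (fun ω : ℝ => ∑ n ∈ Finset.range (N+1),
      (Complex.exp (Complex.I * (m:ℂ) * (t:ℂ)) * ((p.coeff n:ℝ):ℂ) *
        Complex.exp (-Complex.I * (m:ℂ) * ((t - 1 - (n:ℤ) : ℤ):ℂ))) *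
        (X ω * Complex.exp (Complex.I * (ω:ℂ) * (((t - 1 - (n:ℤ) : ℤ)):ℂ))))
      (volume.restrict (Set.Ioc (-π) π)) :=
    integrable_finset_sum _ (fun n _ => hintn _ _)
  -- finite-sum version of the tsum
  have htsum : (∑' n : ℕ, ((p.coeff n : ℝ):ℂ) *
        Complex.exp (-Complex.I * (m:ℂ) * ((t - 1 - (n:ℤ) : ℤ):ℂ)) * x (t - 1 - (n:ℤ)))
      = ∑ n ∈ Finset.range (N+1), ((p.coeff n : ℝ):ℂ) *
        Complex.exp (-Complex.I * (m:ℂ) * ((t - 1 - (n:ℤ) : ℤ):ℂ)) * x (t - 1 - (n:ℤ)) :=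
    tsum_eq_sum hterm0
  -- pull the integrals out
  have hA : Complex.exp (Complex.I * (m:ℂ) * (t:ℂ)) * ∑ n ∈ Finset.range (N+1),
        ((p.coeff n : ℝ):ℂ) * Complex.exp (-Complex.I * (m:ℂ) * ((t - 1 - (n:ℤ) : ℤ):ℂ)) *
          x (t - 1 - (n:ℤ))
      = ((1/(2*π) : ℝ):ℂ) * ∫ ω in Set.Ioc (-π) π, ∑ n ∈ Finset.range (N+1),
          (Complex.exp (Complex.I * (m:ℂ) * (t:ℂ)) * ((p.coeff n:ℝ):ℂ) *
            Complex.exp (-Complex.I * (m:ℂ) * ((t - 1 - (n:ℤ) : ℤ):ℂ))) *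
          (X ω * Complex.exp (Complex.I * (ω:ℂ) * (((t - 1 - (n:ℤ) : ℤ)):ℂ))) := by
    rw [integral_finset_sum _ (fun n _ => hintn _ _), Finset.mul_sum, Finset.mul_sum]
    apply Finset.sum_congr rfl
    intro n _
    rw [hXrep (t - 1 - (n:ℤ)), invZ, integral_const_mul]
    ring
  -- pointwise identity
  have hpoint : ∀ ω : ℝ, (∑ n ∈ Finset.range (N+1),
        (Complex.exp (Complex.I * (m:ℂ) * (t:ℂ)) * ((p.coeff n:ℝ):ℂ) *
          Complex.exp (-Complex.I * (m:ℂ) * ((t - 1 - (n:ℤ) : ℤ):ℂ))) *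
          (X ω * Complex.exp (Complex.I * (ω:ℂ) * (((t - 1 - (n:ℤ) : ℤ)):ℂ))))
      = X ω * Complex.exp (Complex.I * (ω:ℂ) * (t:ℂ)) * (W ω * pC.eval (W ω)) := by
    intro ω
    have heval : pC.eval (W ω) = ∑ n ∈ Finset.range (N+1), ((p.coeff n:ℝ):ℂ) * (W ω)^n := by
      rw [Polynomial.eval_eq_sum_range'
        (lt_of_le_of_lt Polynomial.natDegree_map_le (Nat.lt_succ_self N))]
      apply Finset.sum_congr rfl
      intro n _
      rw [Polynomial.coeff_map]
      rfl
    rw [heval, Finset.mul_sum, Finset.mul_sum]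
    apply Finset.sum_congr rfl
    intro n _
    have hexp : Complex.exp (Complex.I * (m:ℂ) * (t:ℂ)) *
          Complex.exp (-Complex.I * (m:ℂ) * ((t - 1 - (n:ℤ) : ℤ):ℂ)) *
          Complex.exp (Complex.I * (ω:ℂ) * (((t - 1 - (n:ℤ) : ℤ)):ℂ))
        = Complex.exp (Complex.I * (ω:ℂ) * (t:ℂ)) * (W ω * (W ω)^n) := by
      rw [hWdef]
      dsimp only
      rw [← Complex.exp_nat_mul, ← Complex.exp_add, ← Complex.exp_add, ← Complex.exp_add,
        ← Complex.exp_add]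
      congr 1
      push_cast
      ring
    linear_combination ((p.coeff n:ℝ):ℂ) * X ω * hexp
  -- the error as a single integral
  have hxt : x t = ((1/(2*π) : ℝ):ℂ) *
      ∫ ω in Set.Ioc (-π) π, X ω * Complex.exp (Complex.I * (ω:ℂ) * (t:ℂ)) := hXrep t
  rw [htsum, hA, hxt, ← mul_sub, ← integral_sub hXexp_int hsum_int]
  rw [norm_mul]
  have hnc : ‖((1/(2*π) : ℝ):ℂ)‖ = 1/(2*π) := by
    rw [Complex.norm_real, Real.norm_eq_abs, abs_of_pos (by positivity)]
  rw [hnc]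
  -- the integrable bound
  have hX2int : Integrable (fun ω : ℝ => ‖X ω‖^2) (volume.restrict (Set.Ioc (-π) π)) := by
    have := hX2.integrable_norm_rpow two_ne_zero ENNReal.ofNat_ne_top
    refine this.congr (Filter.EventuallyEq.of_eq (funext fun ω => ?_))
    norm_num [Real.rpow_natCast]
  have hBint : Integrable (fun ω : ℝ => δ/2 * (‖X ω‖^2 + 1))
      (volume.restrict (Set.Ioc (-π) π)) :=
    (hX2int.add (integrable_const 1)).const_mul _
  have hhalf : I.halfLen ≤ a := by
    have := hmes I hI
    exact le_trans (by linarith) (le_max_left _ _)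
  have hbound : ∀ᵐ ω ∂(volume.restrict (Set.Ioc (-π) π)),
      ‖X ω * Complex.exp (Complex.I * (ω:ℂ) * (t:ℂ)) - ∑ n ∈ Finset.range (N+1),
        (Complex.exp (Complex.I * (m:ℂ) * (t:ℂ)) * ((p.coeff n:ℝ):ℂ) *
          Complex.exp (-Complex.I * (m:ℂ) * ((t - 1 - (n:ℤ) : ℤ):ℂ))) *
          (X ω * Complex.exp (Complex.I * (ω:ℂ) * (((t - 1 - (n:ℤ) : ℤ)):ℂ)))‖
        ≤ δ/2 * (‖X ω‖^2 + 1) := by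
    filter_upwards [hXout] with ω hω
    rw [hpoint ω]
    by_cases hmem : ω ∈ I.set
    · obtain ⟨-, kk, hkk⟩ := hmem
      have hφa : |ω - m + 2*π*(kk:ℝ)| ≤ a := le_trans hkk.le hhalf
      have hWφ : W ω = Complex.exp (-(Complex.I * ((ω - m + 2*π*(kk:ℝ) : ℝ):ℂ))) := by
        rw [hWdef]
        dsimp only
        rw [show -(Complex.I * ((ω - m + 2*π*(kk:ℝ) : ℝ):ℂ))
            = -(Complex.I * ((ω - m : ℝ):ℂ)) + (-kk:ℤ) * (2*(π:ℂ)*Complex.I) by push_cast; ring]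
        rw [Complex.exp_add, Complex.exp_int_mul_two_pi_mul_I, mul_one]
      have hsmall : ‖1 - W ω * pC.eval (W ω)‖ ≤ δ := by
        rw [hWφ]
        exact hp _ hφa
      have hfac : X ω * Complex.exp (Complex.I * (ω:ℂ) * (t:ℂ)) -
            X ω * Complex.exp (Complex.I * (ω:ℂ) * (t:ℂ)) * (W ω * pC.eval (W ω))
          = X ω * Complex.exp (Complex.I * (ω:ℂ) * (t:ℂ)) * (1 - W ω * pC.eval (W ω)) := by
        ring
      have het : ‖Complex.exp (Complex.I * (ω:ℂ) * (t:ℂ))‖ = 1 := hnorm1 ω t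
      rw [hfac, norm_mul, norm_mul, het, mul_one]
      have h1 : ‖X ω‖ * ‖1 - W ω * pC.eval (W ω)‖ ≤ ‖X ω‖ * δ :=
        mul_le_mul_of_nonneg_left hsmall (norm_nonneg _)
      nlinarith [sq_nonneg (‖X ω‖ - 1), norm_nonneg (X ω)]
    · rw [hω hmem]
      simp only [zero_mul, sub_zero, norm_zero]
      positivity
  have hIb := norm_integral_le_of_norm_le hBint hbound
  -- compute the integral of the bound
  have hvol1 : ∫ _ω in Set.Ioc (-π) π, (1:ℝ) = 2*π := by
    rw [integral_const, measureReal_def, Measure.restrict_apply_univ, Real.volume_Ioc, smul_eq_mul, mul_one,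
      ENNReal.toReal_ofReal (by linarith)]
    ring
  have hpar : ∫ ω in Set.Ioc (-π) π, ‖X ω‖^2 ≤ 2*π*C' := by
    rw [parseval X hX2]
    have : ∑' s : ℤ, ‖invZ X s‖^2 = ∑' s : ℤ, ‖x s‖^2 :=
      tsum_congr fun s => by rw [← hXrep s]
    rw [this]
    have h1 : ∑' s : ℤ, ‖x s‖^2 ≤ C' := le_trans (hbdd x hx) (le_max_left _ _)
    nlinarith
  have hBval : ∫ ω in Set.Ioc (-π) π, δ/2 * (‖X ω‖^2 + 1) ≤ δ/2 * (2*π*C' + 2*π) := by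
    rw [integral_const_mul]
    rw [integral_add hX2int (integrable_const 1)]
    rw [hvol1]
    have := hpar
    nlinarith
  calc 1/(2*π) * ‖∫ ω in Set.Ioc (-π) π, (X ω * Complex.exp (Complex.I * (ω:ℂ) * (t:ℂ)) -
        ∑ n ∈ Finset.range (N+1),
        (Complex.exp (Complex.I * (m:ℂ) * (t:ℂ)) * ((p.coeff n:ℝ):ℂ) *
          Complex.exp (-Complex.I * (m:ℂ) * ((t - 1 - (n:ℤ) : ℤ):ℂ))) *
          (X ω * Complex.exp (Complex.I * (ω:ℂ) * (((t - 1 - (n:ℤ) : ℤ)):ℂ))))‖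
      ≤ 1/(2*π) * (δ/2 * (2*π*C' + 2*π)) := by
        apply mul_le_mul_of_nonneg_left (le_trans hIb hBval) (by positivity)
  _ = δ * (C' + 1) / 2 := by field_simp
  _ = ε / 2 := by
      rw [hδdef]
      field_simp
  _ ≤ ε := by linarith
end
end

section
/- Fix ω₀ ∈ (−π,π], σ ≥ 0 and m ∈ ℤ. For every mapping F assigning a complex number to each restriction x|_{ℤ∖{m}} of a sequence x ∈ ℓ₁(ℤ), one has sup_{x ∈ X_σ} |F(x|_{ℤ∖{m}}) − x(m)| ≥ σ. -/
open MeasureTheory Complex Real Set Filter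

noncomputable section

/-- The Z-transform of an `ℓ₁` sequence, as a (continuous) function of `ω`:
`X(e^{iω}) = ∑_{t∈ℤ} x(t) e^{−iωt}`. -/
def ZT (x : ℤ → ℂ) (ω : ℝ) : ℂ := ∑' t : ℤ, x t * Complex.exp (-Complex.I * (ω : ℂ) * (t : ℂ))

/-- The class `X_σ`: sequences `x ∈ ℓ₁(ℤ)` with `min_{ω∈(−π,π]} |X(e^{iω})| = |X(e^{iω₀})| = σ`. -/
def Xsigma (ω₀ σ : ℝ) : Set (ℤ → ℂ) :=
  {x | MemL1 x ∧ (∀ ω ∈ Set.Ioc (-π) π, σ ≤ ‖ZT x ω‖) ∧ ‖ZT x ω₀‖ = σ}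

/-- for any estimator `F` of the missing value `x(m)` from the observations
`x|_{ℤ∖{m}}`, the worst-case recovery error over `X_σ` is at least `σ`
(i.e. `sup_{x ∈ X_σ} |F(x|_{ℤ∖{m}}) − x(m)| ≥ σ`). -/
theorem stmt_4 (ω₀ : ℝ) (hω₀ : ω₀ ∈ Set.Ioc (-π) π) (σ : ℝ) (hσ : 0 ≤ σ) (m : ℤ)
    (F : ({t : ℤ // t ≠ m} → ℂ) → ℂ) :
    ∀ c : ℝ, c < σ → ∃ x ∈ Xsigma ω₀ σ, c < ‖F (fun t => x t.1) - x m‖ := by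
  intro c hc
  -- the delta sequence with value `a` at `m`
  have key : ∀ a : ℂ, ‖a‖ = σ → (fun t : ℤ => if t = m then a else 0) ∈ Xsigma ω₀ σ := by
    intro a ha
    have hZT : ∀ ω : ℝ, ‖ZT (fun t : ℤ => if t = m then a else 0) ω‖ = σ := by
      intro ω
      have : ZT (fun t : ℤ => if t = m then a else 0) ω
          = a * Complex.exp (-Complex.I * (ω : ℂ) * (m : ℂ)) := by
        unfold ZT
        rw [tsum_eq_single m (fun b hb => by simp [if_neg hb])]
        simp
      rw [this, norm_mul]
      have : ‖Complex.exp (-Complex.I * (ω : ℂ) * (m : ℂ))‖ = 1 := by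
        rw [Complex.norm_exp]
        simp
      rw [this, mul_one, ha]
    refine ⟨?_, fun ω _ => (hZT ω).ge, hZT ω₀⟩
    have : (fun t : ℤ => ‖if t = m then a else 0‖)
        = fun t : ℤ => if t = m then ‖a‖ else 0 := by
      funext t; split <;> simp
    rw [MemL1, this]
    exact (hasSum_ite_eq m ‖a‖).summable
  have hσnorm : ‖((σ : ℝ) : ℂ)‖ = σ := by
    simp [Complex.norm_real, _root_.abs_of_nonneg hσ]
  have hobs : ∀ a : ℂ,
      (fun t : {t : ℤ // t ≠ m} => if t.1 = m then a else 0)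
        = fun _ : {t : ℤ // t ≠ m} => (0 : ℂ) := by
    intro a; funext t; exact if_neg t.2
  set v := F (fun _ => (0 : ℂ)) with hv
  by_cases h : σ ≤ ‖v - (σ : ℂ)‖
  · refine ⟨fun t => if t = m then ((σ : ℝ) : ℂ) else 0, key _ hσnorm, ?_⟩
    rw [hobs]
    simp only [if_pos rfl]
    exact lt_of_lt_of_le hc h
  · refine ⟨fun t => if t = m then (-(σ : ℝ) : ℂ) else 0, key _ (by simpa using hσnorm), ?_⟩
    rw [hobs]
    simp only [if_pos rfl]
    push_neg at h
    have htri : ‖(2 * σ : ℂ)‖ ≤ ‖v - (-(σ : ℝ) : ℂ)‖ + ‖v - (σ : ℂ)‖ := by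
      have : ((2 * σ : ℝ) : ℂ) = (v - (-(σ : ℝ) : ℂ)) - (v - (σ : ℂ)) := by
        push_cast; ring
      calc ‖(2 * σ : ℂ)‖ = ‖(v - (-(σ : ℝ) : ℂ)) - (v - (σ : ℂ))‖ := by rw [← this]; norm_cast
        _ ≤ _ := norm_sub_le _ _
    have h2 : ‖(2 * σ : ℂ)‖ = 2 * σ := by
      rw [show ((2 : ℂ) * σ) = ((2 * σ : ℝ) : ℂ) by push_cast; ring]
      simp [Complex.norm_real, _root_.abs_of_nonneg hσ]
    have : σ < ‖v - (-(σ : ℝ) : ℂ)‖ := by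
      nlinarith [htri, h2, h]
    exact lt_trans hc this
end
end

section
/- Fix ω₀ ∈ (−π,π], σ ≥ 0 and m ∈ ℤ. Define the estimator x̂(m) = −e^{imω₀} ∑_{k∈ℤ, k≠m} e^{−iω₀ k} x(k) (the sum converging absolutely for x ∈ ℓ₁(ℤ)). Then |x̂(m) − x(m)| = σ for every x ∈ X_σ; in particular sup_{x ∈ X_σ} |x̂(m) − x(m)| = σ, so this estimator attains the minimal possible worst-case recovery error over X_σ. -/
open MeasureTheory Complex Real Set Filter

noncomputable section

lemma aux_norm_exp (a : ℂ) (b : ℝ) (c : ℤ) (h : a = Complex.I ∨ a = -Complex.I) :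
    ‖Complex.exp (a * (b:ℂ) * (c:ℂ))‖ = 1 := by
  rcases h with h | h <;> subst h <;>
    (rw [Complex.norm_exp]; simp [Complex.mul_re])

/-- The delta sequence at `m` with value `a`, `‖a‖ = σ`, lies in `Xsigma ω₀ σ`. -/
lemma delta_mem_Xsigma (ω₀ σ : ℝ) (m : ℤ) (a : ℂ) (ha : ‖a‖ = σ) :
    (fun t : ℤ => if t = m then a else 0) ∈ Xsigma ω₀ σ := by
  have hZT : ∀ ω : ℝ, ZT (fun t : ℤ => if t = m then a else 0) ω
      = a * Complex.exp (-Complex.I * (ω : ℂ) * (m : ℂ)) := by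
    intro ω
    have hfun : (fun t : ℤ => (if t = m then a else 0) *
        Complex.exp (-Complex.I * (ω : ℂ) * (t : ℂ)))
        = fun t : ℤ => if t = m then a * Complex.exp (-Complex.I * (ω : ℂ) * (m : ℂ)) else 0 := by
      funext t
      by_cases h : t = m <;> simp [h]
    rw [ZT, hfun]
    exact (hasSum_ite_eq m _).tsum_eq
  have hnorm : ∀ ω : ℝ, ‖ZT (fun t : ℤ => if t = m then a else 0) ω‖ = σ := by
    intro ω
    rw [hZT ω, norm_mul, aux_norm_exp _ _ _ (Or.inr rfl), mul_one, ha]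
  refine ⟨?_, fun ω _ => (hnorm ω).ge, hnorm ω₀⟩
  have : (fun t : ℤ => ‖if t = m then a else 0‖)
      = fun t : ℤ => if t = m then ‖a‖ else 0 := by
    funext t; by_cases h : t = m <;> simp [h]
  rw [MemL1, this]
  exact (hasSum_ite_eq m ‖a‖).summable

/-- the estimator `x̂(m) = −e^{imω₀} ∑_{k≠m} e^{−iω₀k} x(k)` (an absolutely
convergent series for `x ∈ ℓ₁`) satisfies `|x̂(m) − x(m)| = σ` for every `x ∈ X_σ`; and it attains
the minimal possible worst-case recovery error over `X_σ`: every other estimator's worst-case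
error is at least `σ`. -/
theorem stmt_5 (ω₀ : ℝ) (hω₀ : ω₀ ∈ Set.Ioc (-π) π) (σ : ℝ) (hσ : 0 ≤ σ) (m : ℤ) :
    (∀ x ∈ Xsigma ω₀ σ,
      Summable (fun k : {k : ℤ // k ≠ m} =>
        ‖Complex.exp (-Complex.I * (ω₀ : ℂ) * (k.1 : ℂ)) * x k.1‖) ∧
      ‖(-Complex.exp (Complex.I * (ω₀ : ℂ) * (m : ℂ))) *
          (∑' k : {k : ℤ // k ≠ m}, Complex.exp (-Complex.I * (ω₀ : ℂ) * (k.1 : ℂ)) * x k.1)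
        - x m‖ = σ) ∧
    ∀ (F : ({t : ℤ // t ≠ m} → ℂ) → ℂ) (c : ℝ),
      (∀ x ∈ Xsigma ω₀ σ, ‖F (fun t => x t.1) - x m‖ ≤ c) → σ ≤ c := by
  constructor
  · intro x hx
    obtain ⟨hL1, _, hval⟩ := hx
    set f : ℤ → ℂ := fun k => Complex.exp (-Complex.I * (ω₀ : ℂ) * (k : ℂ)) * x k with hf
    have hnf : ∀ k : ℤ, ‖f k‖ = ‖x k‖ := by
      intro k
      rw [hf]
      simp only
      rw [norm_mul, aux_norm_exp _ _ _ (Or.inr rfl), one_mul]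
    have hsumf : Summable fun k : ℤ => ‖f k‖ := by
      simpa only [hnf, MemL1] using hL1
    have hsum : Summable f := Summable.of_norm hsumf
    refine ⟨hsumf.subtype _, ?_⟩
    -- split the Z-transform at m
    have hsplit : ZT x ω₀ = f m + ∑' k : {k : ℤ // k ≠ m}, f k.1 := by
      have h1 : ZT x ω₀ = ∑' k : ℤ, f k := by
        rw [ZT]
        congr 1
        funext k
        rw [hf, mul_comm]
      have h2 : (∑' k : {k : ℤ // k ≠ m}, f k.1)
          = ∑' k : ℤ, if k = m then 0 else f k :=
        calc (∑' k : {k : ℤ // k ≠ m}, f k.1)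
            = ∑' k : ℤ, Set.indicator {n : ℤ | n ≠ m} f k := tsum_subtype _ f
          _ = ∑' k : ℤ, if k = m then 0 else f k := by
              congr 1
              funext k
              by_cases h : k = m <;> simp [Set.indicator, h]
      rw [h1, h2, Summable.tsum_eq_add_tsum_ite hsum m]
    set S : ℂ := ∑' k : {k : ℤ // k ≠ m}, f k.1 with hS
    have hfm : Complex.exp (Complex.I * (ω₀ : ℂ) * (m : ℂ)) * f m = x m := by
      rw [hf]
      simp only
      rw [← mul_assoc, ← Complex.exp_add]
      have : Complex.I * (ω₀ : ℂ) * (m : ℂ) + -Complex.I * (ω₀ : ℂ) * (m : ℂ) = 0 := by ring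
      rw [this, Complex.exp_zero, one_mul]
    have key : (-Complex.exp (Complex.I * (ω₀ : ℂ) * (m : ℂ))) * S - x m
        = (-Complex.exp (Complex.I * (ω₀ : ℂ) * (m : ℂ))) * ZT x ω₀ := by
      rw [hsplit]
      linear_combination hfm
    calc ‖(-Complex.exp (Complex.I * (ω₀ : ℂ) * (m : ℂ))) * S - x m‖
        = ‖(-Complex.exp (Complex.I * (ω₀ : ℂ) * (m : ℂ))) * ZT x ω₀‖ := by rw [key]
      _ = ‖ZT x ω₀‖ := by
          rw [norm_mul, norm_neg, aux_norm_exp _ _ _ (Or.inl rfl), one_mul]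
      _ = σ := hval
  · intro F c hc
    set x₁ : ℤ → ℂ := fun t => if t = m then (σ : ℂ) else 0 with hx₁
    set x₂ : ℤ → ℂ := fun t => if t = m then (-σ : ℂ) else 0 with hx₂
    have h₁ : x₁ ∈ Xsigma ω₀ σ := delta_mem_Xsigma ω₀ σ m _ (by
      rw [Complex.norm_real, Real.norm_of_nonneg hσ])
    have h₂ : x₂ ∈ Xsigma ω₀ σ := delta_mem_Xsigma ω₀ σ m _ (by
      rw [norm_neg, Complex.norm_real, Real.norm_of_nonneg hσ])
    have he : (fun t : {t : ℤ // t ≠ m} => x₁ t.1) = fun t : {t : ℤ // t ≠ m} => x₂ t.1 := by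
      funext t
      simp [hx₁, hx₂, t.2]
    have hc₁ := hc x₁ h₁
    have hc₂ := hc x₂ h₂
    rw [he] at hc₁
    have hm₁ : x₁ m = (σ : ℂ) := by simp [hx₁]
    have hm₂ : x₂ m = (-σ : ℂ) := by simp [hx₂]
    rw [hm₁] at hc₁
    rw [hm₂] at hc₂
    have htri : (2 : ℝ) * σ ≤ 2 * c := by
      have h2σ : ‖((σ : ℂ)) - (-(σ : ℂ))‖ = 2 * σ := by
        have : ((σ : ℂ)) - (-(σ : ℂ)) = ((2 * σ : ℝ) : ℂ) := by push_cast; ring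
        rw [this, Complex.norm_real, Real.norm_of_nonneg (by linarith)]
      calc (2 : ℝ) * σ = ‖((σ : ℂ)) - (-(σ : ℂ))‖ := h2σ.symm
        _ ≤ ‖(σ : ℂ) - F (fun t => x₂ t.1)‖ + ‖F (fun t => x₂ t.1) - (-(σ : ℂ))‖ := by
            exact norm_sub_le_norm_sub_add_norm_sub _ _ _
        _ ≤ c + c := by rw [norm_sub_rev]; exact add_le_add hc₁ hc₂
        _ = 2 * c := by ring
    linarith
end
end

section
/- For every I ∈ J and every x ∈ ℓ₂^{−,LBL}(I), there exists a unique x_BL ∈ ℓ₂^{BL}(I) such that x(t) = x_BL(t) for all t ≤ 0. In other words, a band-limited sequence with spectrum in a proper arc is uniquely determined by its trace on {t ≤ 0}. -/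
open MeasureTheory Complex Real Set Filter

noncomputable section

/-! ### Auxiliary material for the proof of Statement 6 -/

namespace Stmt6Aux

/-- The norm of `exp (I * a * b)` for real `a`, `b` is `1`. -/
lemma norm_exp_I_mul (a b : ℝ) : ‖Complex.exp (Complex.I * a * b)‖ = 1 := by
  rw [Complex.norm_exp]
  have : (Complex.I * a * b).re = 0 := by simp [Complex.mul_re]
  rw [this, Real.exp_zero]

lemma norm_exp_I_mul' (a : ℝ) : ‖Complex.exp (Complex.I * a)‖ = 1 := by
  simpa using norm_exp_I_mul a 1

lemma norm_exp_neg_I_mul (a : ℝ) : ‖Complex.exp (-Complex.I * a)‖ = 1 := by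
  have : (-Complex.I * a) = Complex.I * (-a : ℝ) := by push_cast; ring
  rw [this]; exact norm_exp_I_mul' (-a)

lemma norm_exp_I_mul_int (a : ℝ) (c : ℤ) : ‖Complex.exp (Complex.I * a * c)‖ = 1 := by
  have : ((c : ℤ) : ℂ) = ((c : ℝ) : ℂ) := by push_cast; ring
  rw [this]; exact norm_exp_I_mul a c

/-- Multiplying an integrable function by the unimodular factor `exp (I ω c)` preserves
integrability. -/
lemma integrable_mul_exp {X : ℝ → ℂ} {μ : MeasureTheory.Measure ℝ}
    (hX : Integrable X μ) (c : ℤ) :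
    Integrable (fun ω : ℝ => X ω * Complex.exp (Complex.I * ω * c)) μ := by
  have hc : Continuous fun ω : ℝ => Complex.exp (Complex.I * ω * c) := by
    fun_prop
  have h := hX.bdd_mul (f := fun ω : ℝ => Complex.exp (Complex.I * ω * c))
    hc.aestronglyMeasurable (Filter.Eventually.of_forall fun ω => le_of_eq (norm_exp_I_mul_int ω c))
  exact h.congr (Filter.Eventually.of_forall fun ω => mul_comm _ _)

/-- The compact arc on the unit circle which carries the singularities of the transform `Φ`. -/
def Kset (I : Arc) : Set ℂ :=
  (fun u : ℝ => Complex.exp (-Complex.I * ((I.mid : ℂ) + (u : ℂ)))) ''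
    (Set.Icc (-I.halfLen) I.halfLen)

lemma Kset_compact (I : Arc) : IsCompact (Kset I) := by
  apply IsCompact.image isCompact_Icc
  fun_prop

lemma Kset_nonempty (I : Arc) : (Kset I).Nonempty := by
  refine ⟨_, Set.mem_image_of_mem _ (show (0 : ℝ) ∈ Set.Icc (-I.halfLen) I.halfLen from ?_)⟩
  have := I.halfLen_pos
  constructor <;> [linarith; linarith]

lemma norm_mem_Kset (I : Arc) {z : ℂ} (hz : z ∈ Kset I) : ‖z‖ = 1 := by
  obtain ⟨u, _, rfl⟩ := hz
  show ‖Complex.exp (-Complex.I * ((I.mid : ℂ) + (u : ℂ)))‖ = 1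
  have : -Complex.I * ((I.mid : ℂ) + (u : ℂ)) = -Complex.I * ((I.mid + u : ℝ) : ℂ) := by
    push_cast; ring
  rw [this]; exact norm_exp_neg_I_mul _

/-- If `X` is supported in the arc, then for `X ω ≠ 0` the point `exp (-I ω)` lies in `Kset`. -/
lemma mem_Kset_of_supp (I : Arc) {X : ℝ → ℂ}
    (hsupp : ∀ ω, X ω ≠ 0 → ω ∈ I.set) {ω : ℝ} (hω : X ω ≠ 0) :
    Complex.exp (-Complex.I * ω) ∈ Kset I := by
  obtain ⟨-, k, hk⟩ := hsupp ω hω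
  set r : ℝ := ω - I.mid + 2 * π * k with hr
  refine ⟨r, ?_, ?_⟩
  · rw [Set.mem_Icc]
    constructor <;> [nlinarith [abs_lt.mp hk]; nlinarith [abs_lt.mp hk]]
  · have hω' : (ω : ℂ) = (I.mid : ℂ) + (r : ℂ) - 2 * π * k := by
      have : (r : ℂ) = (ω : ℂ) - I.mid + 2 * π * k := by push_cast [hr]; ring
      rw [this]; ring
    rw [hω']
    have : -Complex.I * ((I.mid : ℂ) + (r : ℂ) - 2 * π * k)
        = -Complex.I * ((I.mid : ℂ) + (r : ℂ)) + (k : ℂ) * (2 * π * Complex.I) := by ring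
    rw [this, Complex.exp_add, Complex.exp_int_mul_two_pi_mul_I, mul_one]

/-- Lower bound for the denominator `1 - w exp (I ω)` in terms of the distance to `Kset`. -/
lemma denom_lb (I : Arc) (w : ℂ) (ω : ℝ)
    (hm : Complex.exp (-Complex.I * ω) ∈ Kset I) :
    Metric.infDist w (Kset I) ≤ ‖1 - w * Complex.exp (Complex.I * ω)‖ := by
  have h1 : 1 - w * Complex.exp (Complex.I * ω)
      = (Complex.exp (-Complex.I * ω) - w) * Complex.exp (Complex.I * ω) := by
    rw [sub_mul, ← Complex.exp_add]
    norm_num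
  rw [h1, norm_mul, norm_exp_I_mul' ω, mul_one, norm_sub_rev, ← dist_eq_norm]
  exact Metric.infDist_le_dist_of_mem hm

/-- The Cauchy-type transform of `X`. -/
def Phi (X : ℝ → ℂ) (w : ℂ) : ℂ :=
  ∫ ω in Set.Ioc (-π) π,
    X ω * (w * Complex.exp (Complex.I * ω)) / (1 - w * Complex.exp (Complex.I * ω))

lemma phi_diff (I : Arc) (X : ℝ → ℂ)
    (hXi : Integrable X (volume.restrict (Set.Ioc (-π) π)))
    (hsupp : ∀ ω, X ω ≠ 0 → ω ∈ I.set) :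
    DifferentiableOn ℂ (Phi X) (Kset I)ᶜ := by
  intro w₀ hw₀
  refine DifferentiableAt.differentiableWithinAt ?_
  have hKc : IsClosed (Kset I) := (Kset_compact I).isClosed
  set d := Metric.infDist w₀ (Kset I) with hd
  have hd0 : 0 < d := (hKc.notMem_iff_infDist_pos (Kset_nonempty I)).mp hw₀
  -- lower bound for the denominators on a small ball
  have hlb : ∀ w ∈ Metric.ball w₀ (d / 2), ∀ ω : ℝ, X ω ≠ 0 →
      d / 2 ≤ ‖1 - w * Complex.exp (Complex.I * ω)‖ := by
    intro w hw ω hω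
    have h1 : Metric.infDist w (Kset I) ≤ ‖1 - w * Complex.exp (Complex.I * ω)‖ :=
      denom_lb I w ω (mem_Kset_of_supp I hsupp hω)
    have h2 : d ≤ Metric.infDist w (Kset I) + dist w₀ w :=
      Metric.infDist_le_infDist_add_dist
    have h3 : dist w w₀ < d / 2 := Metric.mem_ball.mp hw
    rw [dist_comm] at h3
    linarith
  set F : ℂ → ℝ → ℂ := fun w ω =>
    X ω * (w * Complex.exp (Complex.I * ω)) / (1 - w * Complex.exp (Complex.I * ω)) with hF
  set F' : ℂ → ℝ → ℂ := fun w ω =>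
    X ω * Complex.exp (Complex.I * ω) / (1 - w * Complex.exp (Complex.I * ω)) ^ 2 with hF'
  have hmeas : ∀ w : ℂ, AEStronglyMeasurable (F w) (volume.restrict (Set.Ioc (-π) π)) := by
    intro w
    have h1 : AEMeasurable (fun ω : ℝ => X ω * (w * Complex.exp (Complex.I * ω)))
        (volume.restrict (Set.Ioc (-π) π)) :=
      hXi.aestronglyMeasurable.aemeasurable.mul (Continuous.aemeasurable (by fun_prop))
    have h2 : AEMeasurable (fun ω : ℝ => 1 - w * Complex.exp (Complex.I * ω))
        (volume.restrict (Set.Ioc (-π) π)) :=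
      Continuous.aemeasurable (by fun_prop)
    exact (h1.div h2).aestronglyMeasurable
  have hmeas' : AEStronglyMeasurable (F' w₀) (volume.restrict (Set.Ioc (-π) π)) := by
    have h1 : AEMeasurable (fun ω : ℝ => X ω * Complex.exp (Complex.I * ω))
        (volume.restrict (Set.Ioc (-π) π)) :=
      hXi.aestronglyMeasurable.aemeasurable.mul (Continuous.aemeasurable (by fun_prop))
    have h2 : AEMeasurable (fun ω : ℝ => (1 - w₀ * Complex.exp (Complex.I * ω)) ^ 2)
        (volume.restrict (Set.Ioc (-π) π)) :=
      Continuous.aemeasurable (by fun_prop)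
    exact (h1.div h2).aestronglyMeasurable
  have hFint : Integrable (F w₀) (volume.restrict (Set.Ioc (-π) π)) := by
    refine (hXi.norm.mul_const (‖w₀‖ / (d / 2))).mono' (hmeas w₀) ?_
    refine Filter.Eventually.of_forall fun ω => ?_
    by_cases hω : X ω = 0
    · have : F w₀ ω = 0 := by rw [hF]; simp [hω]
      rw [this, norm_zero]
      positivity
    · have hden := hlb w₀ (Metric.mem_ball_self (by positivity)) ω hω
      rw [hF]
      simp only [norm_div, norm_mul, norm_exp_I_mul']
      rw [mul_one, ← mul_div_assoc]
      refine div_le_div_of_nonneg_left ?_ (by positivity) hden |>.trans ?_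
      · positivity
      · rw [mul_div_assoc]
  have hbint : Integrable (fun ω => ‖X ω‖ * ((d / 2) ^ 2)⁻¹)
      (volume.restrict (Set.Ioc (-π) π)) := hXi.norm.mul_const _
  have hbound : ∀ᵐ ω ∂(volume.restrict (Set.Ioc (-π) π)),
      ∀ w ∈ Metric.ball w₀ (d / 2), ‖F' w ω‖ ≤ ‖X ω‖ * ((d / 2) ^ 2)⁻¹ := by
    refine Filter.Eventually.of_forall fun ω w hw => ?_
    by_cases hω : X ω = 0
    · have : F' w ω = 0 := by rw [hF']; simp [hω]
      rw [this, norm_zero]; positivity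
    · have hden := hlb w hw ω hω
      rw [hF']
      simp only [norm_div, norm_mul, norm_exp_I_mul', norm_pow, mul_one]
      rw [← div_eq_mul_inv]
      gcongr
  have hdiff : ∀ᵐ ω ∂(volume.restrict (Set.Ioc (-π) π)),
      ∀ w ∈ Metric.ball w₀ (d / 2), HasDerivAt (fun v => F v ω) (F' w ω) w := by
    refine Filter.Eventually.of_forall fun ω w hw => ?_
    by_cases hω : X ω = 0
    · have h1 : (fun v => F v ω) = fun _ => 0 := by funext v; rw [hF]; simp [hω]
      have h2 : F' w ω = 0 := by rw [hF']; simp [hω]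
      rw [h1, h2]; exact hasDerivAt_const _ _
    · have hden : 1 - w * Complex.exp (Complex.I * ω) ≠ 0 := by
        intro hcontra
        have := hlb w hw ω hω
        rw [hcontra, norm_zero] at this
        have : (0:ℝ) < d/2 := by positivity
        linarith
      have hu : HasDerivAt (fun v : ℂ => X ω * (v * Complex.exp (Complex.I * ω)))
          (X ω * Complex.exp (Complex.I * ω)) w := by
        simpa using ((hasDerivAt_id w).mul_const (Complex.exp (Complex.I * ω))).const_mul (X ω)
      have hv : HasDerivAt (fun v : ℂ => 1 - v * Complex.exp (Complex.I * ω))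
          (-Complex.exp (Complex.I * ω)) w := by
        simpa using ((hasDerivAt_id w).mul_const (Complex.exp (Complex.I * ω))).const_sub 1
      have hq := hu.div hv hden
      refine hq.congr_deriv ?_
      rw [hF']
      field_simp
      ring
  have := (hasDerivAt_integral_of_dominated_loc_of_deriv_le
    (Metric.ball_mem_nhds w₀ (by positivity : (0:ℝ) < d / 2))
    (Filter.Eventually.of_forall hmeas) hFint hmeas' hbound hbint hdiff).2
  exact this.differentiableAt

lemma phi_outer (I : Arc) (X : ℝ → ℂ)
    (hXi : Integrable X (volume.restrict (Set.Ioc (-π) π)))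
    (h0 : ∀ t : ℤ, t ≤ 0 →
      (∫ ω in Set.Ioc (-π) π, X ω * Complex.exp (Complex.I * ω * t)) = 0) :
    ∀ w : ℂ, 1 < ‖w‖ → Phi X w = 0 := by
  intro w hw
  have hwne : w ≠ 0 := by
    intro h; rw [h, norm_zero] at hw; linarith
  have hene : ∀ ω : ℝ, Complex.exp (Complex.I * ω) ≠ 0 := fun ω => Complex.exp_ne_zero _
  set F : ℕ → ℝ → ℂ := fun m ω =>
    (-(w⁻¹ ^ m)) * (X ω * Complex.exp (Complex.I * ω * ((-(m : ℤ) : ℤ) : ℂ))) with hF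
  have hFint : ∀ m, Integrable (F m) (volume.restrict (Set.Ioc (-π) π)) := fun m =>
    (integrable_mul_exp hXi (-(m : ℤ))).const_mul _
  have hnormF : ∀ m ω, ‖F m ω‖ = ‖w⁻¹‖ ^ m * ‖X ω‖ := by
    intro m ω
    rw [hF]
    simp only [norm_mul, norm_neg, norm_pow, norm_exp_I_mul_int, mul_one]
  have hsum : Summable fun m => ∫ ω in Set.Ioc (-π) π, ‖F m ω‖ := by
    have heq : ∀ m : ℕ, (∫ ω in Set.Ioc (-π) π, ‖F m ω‖)
        = ‖w⁻¹‖ ^ m * ∫ ω in Set.Ioc (-π) π, ‖X ω‖ := by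
      intro m
      simp_rw [hnormF]
      exact MeasureTheory.integral_const_mul _ _
    have hs : Summable fun m : ℕ => ‖w⁻¹‖ ^ m * ∫ ω in Set.Ioc (-π) π, ‖X ω‖ := by
      apply Summable.mul_right
      refine summable_geometric_of_lt_one (norm_nonneg _) ?_
      rw [norm_inv]
      exact inv_lt_one_of_one_lt₀ hw
    exact hs.congr fun m => (heq m).symm
  have hswap := MeasureTheory.integral_tsum_of_summable_integral_norm hFint hsum
  have hzero : ∀ m : ℕ, (∫ ω in Set.Ioc (-π) π, F m ω) = 0 := by
    intro m
    rw [hF]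
    simp only
    rw [MeasureTheory.integral_const_mul, h0 (-(m : ℤ)) (by omega), mul_zero]
  have hpt : ∀ ω : ℝ, (∑' m, F m ω)
      = X ω * (w * Complex.exp (Complex.I * ω)) / (1 - w * Complex.exp (Complex.I * ω)) := by
    intro ω
    set e : ℂ := Complex.exp (Complex.I * ω) with he
    have hnorm_e : ‖e‖ = 1 := norm_exp_I_mul' ω
    have hq : ‖(w * e)⁻¹‖ < 1 := by
      rw [norm_inv, norm_mul, hnorm_e, mul_one]
      exact inv_lt_one_of_one_lt₀ hw
    have hgeo := tsum_geometric_of_norm_lt_one hq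
    have hterm : ∀ m : ℕ, F m ω = (-(X ω)) * ((w * e)⁻¹) ^ m := by
      intro m
      rw [hF]
      simp only
      have h1 : Complex.exp (Complex.I * ω * ((-(m : ℤ) : ℤ) : ℂ)) = (e⁻¹) ^ m := by
        rw [he, ← Complex.exp_neg, ← Complex.exp_nat_mul]
        congr 1
        push_cast
        ring
      rw [h1, mul_inv, mul_pow]
      ring
    have hne : w * e ≠ 0 := mul_ne_zero hwne (hene ω)
    have hne1 : 1 - w * e ≠ 0 := by
      intro hc
      rw [sub_eq_zero] at hc
      have : ‖w * e‖ = 1 := by rw [← hc]; simp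
      rw [norm_mul, hnorm_e, mul_one] at this
      linarith
    have hne2 : 1 - (w * e)⁻¹ ≠ 0 := by
      intro hc
      rw [sub_eq_zero] at hc
      have : ‖(w * e)⁻¹‖ = 1 := by rw [← hc]; simp
      linarith
    calc (∑' m, F m ω) = ∑' m, (-(X ω)) * ((w * e)⁻¹) ^ m := tsum_congr hterm
      _ = (-(X ω)) * (1 - (w * e)⁻¹)⁻¹ := by rw [tsum_mul_left, hgeo]
      _ = X ω * (w * e) / (1 - w * e) := by
          have h3 : 1 - (w * e)⁻¹ = (w * e - 1) * (w * e)⁻¹ := by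
            rw [sub_mul, mul_inv_cancel₀ hne, one_mul]
          rw [h3, mul_inv, inv_inv]
          rw [show (1 : ℂ) - w * e = -(w * e - 1) from by ring, div_neg, div_eq_mul_inv]
          ring
  have : Phi X w = ∫ ω in Set.Ioc (-π) π, ∑' m, F m ω := by
    refine MeasureTheory.integral_congr_ae (Filter.Eventually.of_forall fun ω => ?_)
    exact (hpt ω).symm
  rw [this, ← hswap]
  simp [hzero]

lemma phi_inner_hasSum (X : ℝ → ℂ)
    (hXi : Integrable X (volume.restrict (Set.Ioc (-π) π))) :
    ∀ w : ℂ, ‖w‖ < 1 → HasSum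
      (fun n : ℕ =>
        (∫ ω in Set.Ioc (-π) π,
          X ω * Complex.exp (Complex.I * ω * (((n : ℤ) + 1 : ℤ) : ℂ))) * w ^ (n + 1))
      (Phi X w) := by
  intro w hw
  set F : ℕ → ℝ → ℂ := fun n ω =>
    (X ω * Complex.exp (Complex.I * ω * (((n : ℤ) + 1 : ℤ) : ℂ))) * w ^ (n + 1) with hF
  have hFint : ∀ n, Integrable (F n) (volume.restrict (Set.Ioc (-π) π)) := fun n =>
    (integrable_mul_exp hXi ((n : ℤ) + 1)).mul_const _
  have hnormF : ∀ n ω, ‖F n ω‖ = ‖X ω‖ * ‖w‖ ^ (n + 1) := by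
    intro n ω
    rw [hF]
    simp only [norm_mul, norm_pow, norm_exp_I_mul_int, mul_one]
  have hsum : Summable fun n => ∫ ω in Set.Ioc (-π) π, ‖F n ω‖ := by
    have heq : ∀ n : ℕ, (∫ ω in Set.Ioc (-π) π, ‖F n ω‖)
        = (∫ ω in Set.Ioc (-π) π, ‖X ω‖) * ‖w‖ ^ (n + 1) := by
      intro n
      simp_rw [hnormF]
      exact MeasureTheory.integral_mul_const _ _
    have hs : Summable fun n : ℕ => (∫ ω in Set.Ioc (-π) π, ‖X ω‖) * ‖w‖ ^ (n + 1) := by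
      apply Summable.mul_left
      have := (summable_geometric_of_lt_one (norm_nonneg w) hw).mul_right ‖w‖
      exact this.congr fun n => (pow_succ ‖w‖ n).symm
    exact hs.congr fun n => (heq n).symm
  have hswap := MeasureTheory.hasSum_integral_of_summable_integral_norm hFint hsum
  have h1 : (fun n : ℕ =>
      (∫ ω in Set.Ioc (-π) π,
        X ω * Complex.exp (Complex.I * ω * (((n : ℤ) + 1 : ℤ) : ℂ))) * w ^ (n + 1))
      = fun n => ∫ ω in Set.Ioc (-π) π, F n ω := by
    funext n
    rw [hF]
    exact (MeasureTheory.integral_mul_const _ _).symm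
  have h2 : (∫ ω in Set.Ioc (-π) π, ∑' n, F n ω) = Phi X w := by
    refine MeasureTheory.integral_congr_ae (Filter.Eventually.of_forall fun ω => ?_)
    set e : ℂ := Complex.exp (Complex.I * ω) with he
    have hq : ‖w * e‖ < 1 := by
      rw [norm_mul, norm_exp_I_mul', mul_one]; exact hw
    have hgeo := (hasSum_geometric_of_norm_lt_one hq).mul_left (X ω * (w * e))
    have hterm : ∀ n : ℕ, (X ω * (w * e)) * (w * e) ^ n = F n ω := by
      intro n
      rw [hF]
      simp only
      have h5 : Complex.exp (Complex.I * ω * (((n : ℤ) + 1 : ℤ) : ℂ)) = e ^ (n + 1) := by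
        rw [he, ← Complex.exp_nat_mul]
        congr 1
        push_cast
        ring
      rw [h5, mul_pow]
      ring
    calc (∑' n, F n ω) = ∑' n, (X ω * (w * e)) * (w * e) ^ n := tsum_congr fun n => (hterm n).symm
      _ = (X ω * (w * e)) * (1 - w * e)⁻¹ := hgeo.tsum_eq
      _ = X ω * (w * e) / (1 - w * e) := (div_eq_mul_inv _ _).symm
  rw [h1, ← h2]
  exact hswap

lemma phi_zero_ball (I : Arc) (X : ℝ → ℂ)
    (hXi : Integrable X (volume.restrict (Set.Ioc (-π) π)))
    (hsupp : ∀ ω, X ω ≠ 0 → ω ∈ I.set)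
    (h0 : ∀ t : ℤ, t ≤ 0 →
      (∫ ω in Set.Ioc (-π) π, X ω * Complex.exp (Complex.I * ω * t)) = 0) :
    ∀ w : ℂ, ‖w‖ < 1 → Phi X w = 0 := by
  have hπ := Real.pi_pos
  set p : ℂ := Complex.exp (-Complex.I * ((I.mid : ℂ) + ((π : ℝ) : ℂ))) with hp
  have hnp : ‖p‖ = 1 := by
    rw [hp, show -Complex.I * ((I.mid : ℂ) + ((π : ℝ) : ℂ))
      = -Complex.I * ((I.mid + π : ℝ) : ℂ) from by push_cast; ring]
    exact norm_exp_neg_I_mul _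
  have hpK : p ∉ Kset I := by
    rintro ⟨u, hu, hequ⟩
    rw [Set.mem_Icc] at hu
    have h1 : Complex.exp (-Complex.I * ((I.mid : ℂ) + (u : ℂ)))
        = Complex.exp (-Complex.I * ((I.mid : ℂ) + ((π : ℝ) : ℂ))) := hequ
    rw [Complex.exp_eq_exp_iff_exists_int] at h1
    obtain ⟨n, hn⟩ := h1
    have him := congrArg Complex.im hn
    simp only [Complex.mul_im, Complex.neg_im, Complex.neg_re, Complex.I_re, Complex.I_im,
      Complex.add_re, Complex.add_im, Complex.ofReal_re, Complex.ofReal_im,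
      Complex.mul_re, Complex.intCast_re, Complex.intCast_im, Complex.re_ofNat,
      Complex.im_ofNat] at him
    -- him : -(mid + u) = -(mid + π) + n * 2π  (up to arrangement)
    have hu' : u = π + 2 * π * (-n : ℤ) := by push_cast at him ⊢; linarith [him]
    have hlt := I.halfLen_lt
    rcases le_or_gt 0 (-n : ℤ) with hn0 | hn0
    · have : (0 : ℝ) ≤ ((-n : ℤ) : ℝ) := by exact_mod_cast hn0
      nlinarith [hu.2]
    · have : ((-n : ℤ) : ℝ) ≤ -1 := by exact_mod_cast (show (-n : ℤ) ≤ -1 by omega)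
      nlinarith [hu.1]
  set ρ : ℝ := Metric.infDist p (Kset I) with hρdef
  have hρ : 0 < ρ :=
    ((Kset_compact I).isClosed.notMem_iff_infDist_pos (Kset_nonempty I)).mp hpK
  have hsub1 : Metric.ball (0 : ℂ) 1 ⊆ (Kset I)ᶜ := by
    intro z hz hzK
    have h1 := norm_mem_Kset I hzK
    rw [Metric.mem_ball, dist_zero_right] at hz
    linarith
  have hsub2 : Metric.ball p ρ ⊆ (Kset I)ᶜ := by
    intro z hz hzK
    have h1 : ρ ≤ dist p z := Metric.infDist_le_dist_of_mem hzK
    rw [Metric.mem_ball, dist_comm] at hz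
    linarith
  set W : Set ℂ := Metric.ball (0 : ℂ) 1 ∪ Metric.ball p ρ with hW
  have hWsub : W ⊆ (Kset I)ᶜ := Set.union_subset hsub1 hsub2
  have hA : AnalyticOnNhd ℂ (Phi X) W :=
    ((phi_diff I X hXi hsupp).analyticOnNhd (Kset_compact I).isClosed.isOpen_compl).mono hWsub
  -- a common point of the two balls
  set ε : ℝ := min (ρ / 2) (1 / 2) with hε
  have hε0 : 0 < ε := by
    apply lt_min <;> [positivity; norm_num]
  have hε1 : ε ≤ ρ / 2 := min_le_left _ _
  have hε2 : ε ≤ 1 / 2 := min_le_right _ _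
  set z₁ : ℂ := ((1 - ε : ℝ) : ℂ) * p with hz₁
  have hz₁ball : z₁ ∈ Metric.ball (0 : ℂ) 1 := by
    rw [Metric.mem_ball, dist_zero_right, hz₁, norm_mul, hnp, mul_one,
      Complex.norm_real, Real.norm_eq_abs, abs_of_pos (by linarith)]
    linarith
  have hz₁ball' : z₁ ∈ Metric.ball p ρ := by
    rw [Metric.mem_ball, dist_eq_norm, hz₁,
      show ((1 - ε : ℝ) : ℂ) * p - p = ((-ε : ℝ) : ℂ) * p from by push_cast; ring,
      norm_mul, hnp, mul_one, Complex.norm_real, Real.norm_eq_abs, abs_of_neg (by linarith)]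
    linarith
  have hWpre : IsPreconnected W :=
    IsPreconnected.union z₁ hz₁ball hz₁ball'
      (convex_ball _ _).isPreconnected (convex_ball _ _).isPreconnected
  -- a point of the outer region inside the second ball
  set z₀ : ℂ := ((1 + ρ / 2 : ℝ) : ℂ) * p with hz₀
  have hz₀ball : z₀ ∈ Metric.ball p ρ := by
    rw [Metric.mem_ball, dist_eq_norm, hz₀,
      show ((1 + ρ / 2 : ℝ) : ℂ) * p - p = ((ρ / 2 : ℝ) : ℂ) * p from by push_cast; ring,
      norm_mul, hnp, mul_one, Complex.norm_real, Real.norm_eq_abs, abs_of_pos (by linarith)]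
    linarith
  have hz₀norm : 1 < ‖z₀‖ := by
    rw [hz₀, norm_mul, hnp, mul_one, Complex.norm_real, Real.norm_eq_abs,
      abs_of_pos (by linarith)]
    linarith
  have hfz : Phi X =ᶠ[nhds z₀] 0 := by
    have hopen : IsOpen {w : ℂ | 1 < ‖w‖} := isOpen_lt continuous_const continuous_norm
    filter_upwards [hopen.mem_nhds hz₀norm] with w hw
    exact phi_outer I X hXi h0 w hw
  have hzero : Set.EqOn (Phi X) 0 W :=
    hA.eqOn_zero_of_preconnected_of_eventuallyEq_zero hWpre (Or.inr hz₀ball) hfz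
  intro w hw
  exact hzero (Or.inl (Metric.mem_ball.mpr (by rwa [dist_zero_right])))

lemma integral_exp_Ioc (c : ℤ) :
    (∫ θ in Set.Ioc (0 : ℝ) (2 * π), Complex.exp (Complex.I * θ * c))
      = if c = 0 then ((2 * π : ℝ) : ℂ) else 0 := by
  have h2π : (0 : ℝ) ≤ 2 * π := by positivity
  rw [← intervalIntegral.integral_of_le h2π]
  by_cases hc : c = 0
  · subst hc
    rw [if_pos rfl]
    simp
  · rw [if_neg hc]
    have hrw : ∀ θ : ℝ, Complex.I * θ * c = (Complex.I * c) * θ := fun θ => by ring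
    simp_rw [hrw]
    have hne : Complex.I * (c : ℂ) ≠ 0 :=
      mul_ne_zero Complex.I_ne_zero (by exact_mod_cast hc)
    rw [integral_exp_mul_complex hne]
    have h1 : Complex.I * c * ((2 * π : ℝ) : ℂ) = (c : ℂ) * (2 * (π : ℂ) * Complex.I) := by
      push_cast
      ring
    have h2 : Complex.I * c * ((0 : ℝ) : ℂ) = 0 := by
      push_cast
      ring
    rw [h1, h2, Complex.exp_int_mul_two_pi_mul_I, Complex.exp_zero, sub_self, zero_div]

theorem key (I : Arc) (X : ℝ → ℂ)
    (hXi : Integrable X (volume.restrict (Set.Ioc (-π) π)))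
    (hsupp : ∀ ω, X ω ≠ 0 → ω ∈ I.set)
    (h0 : ∀ t : ℤ, t ≤ 0 →
      (∫ ω in Set.Ioc (-π) π, X ω * Complex.exp (Complex.I * ω * t)) = 0)
    (t : ℤ) :
    (∫ ω in Set.Ioc (-π) π, X ω * Complex.exp (Complex.I * ω * t)) = 0 := by
  have hπ := Real.pi_pos
  rcases le_or_gt t 0 with ht | ht
  · exact h0 t ht
  · obtain ⟨N, hN⟩ : ∃ N : ℕ, t = (N : ℤ) + 1 := ⟨(t - 1).toNat, by omega⟩
    subst hN
    set A : ℤ → ℂ := fun c => ∫ ω in Set.Ioc (-π) π, X ω * Complex.exp (Complex.I * ω * (c : ℂ))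
      with hA
    have hAbd : ∀ c : ℤ, ‖A c‖ ≤ ∫ ω in Set.Ioc (-π) π, ‖X ω‖ := by
      intro c
      refine (MeasureTheory.norm_integral_le_integral_norm _).trans (le_of_eq ?_)
      refine MeasureTheory.integral_congr_ae (Filter.Eventually.of_forall fun ω => ?_)
      show ‖X ω * Complex.exp (Complex.I * ω * (c : ℂ))‖ = ‖X ω‖
      rw [norm_mul, norm_exp_I_mul_int, mul_one]
    set E : ℝ → ℂ := fun θ => Complex.exp (Complex.I * θ * ((-(N : ℤ) - 1 : ℤ) : ℂ)) with hE
    set g : ℕ → ℝ → ℂ := fun n θ =>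
      A ((n : ℤ) + 1) * (((1/2 : ℝ) : ℂ) * Complex.exp (Complex.I * θ)) ^ (n + 1) * E θ with hg
    have hwθ : ∀ θ : ℝ, ‖((1/2 : ℝ) : ℂ) * Complex.exp (Complex.I * θ)‖ = 1/2 := by
      intro θ
      rw [norm_mul, norm_exp_I_mul', mul_one, Complex.norm_real, Real.norm_eq_abs]
      norm_num
    have hgpt : ∀ θ : ℝ, (∑' n, g n θ) = 0 := by
      intro θ
      have h1 := phi_inner_hasSum X hXi (((1/2 : ℝ) : ℂ) * Complex.exp (Complex.I * θ))
        (by rw [hwθ]; norm_num)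
      rw [phi_zero_ball I X hXi hsupp h0 _ (by rw [hwθ]; norm_num)] at h1
      have h2 := h1.mul_right (E θ)
      rw [zero_mul] at h2
      exact h2.tsum_eq
    have hgint : ∀ n, Integrable (g n) (volume.restrict (Set.Ioc (0 : ℝ) (2 * π))) := by
      intro n
      apply Continuous.integrableOn_Ioc
      fun_prop
    have hgnorm : ∀ n θ, ‖g n θ‖ = ‖A ((n : ℤ) + 1)‖ * (1/2 : ℝ) ^ (n + 1) := by
      intro n θ
      rw [hg]
      simp only [norm_mul, norm_pow, hwθ]
      rw [hE]
      simp only [norm_exp_I_mul_int, mul_one]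
    have hgsum : Summable fun n => ∫ θ in Set.Ioc (0 : ℝ) (2 * π), ‖g n θ‖ := by
      have heq : ∀ n : ℕ, (∫ θ in Set.Ioc (0 : ℝ) (2 * π), ‖g n θ‖)
          = (2 * π) * (‖A ((n : ℤ) + 1)‖ * (1/2 : ℝ) ^ (n + 1)) := by
        intro n
        simp_rw [hgnorm]
        rw [MeasureTheory.setIntegral_const, MeasureTheory.measureReal_def, Real.volume_Ioc,
          ENNReal.toReal_ofReal (by rw [sub_zero]; positivity), smul_eq_mul]
        ring
      have hb : Summable fun n : ℕ =>
          (2 * π * ∫ ω in Set.Ioc (-π) π, ‖X ω‖) * ((1/2 : ℝ)) ^ (n + 1) := by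
        apply Summable.mul_left
        have := (summable_geometric_of_lt_one (by norm_num : (0:ℝ) ≤ 1/2)
          (by norm_num)).mul_right (1/2 : ℝ)
        exact this.congr fun n => (pow_succ _ _).symm
      refine Summable.of_nonneg_of_le
        (fun n => MeasureTheory.integral_nonneg fun θ => norm_nonneg _) (fun n => ?_) hb
      rw [heq n, show (2 * π * ∫ ω in Set.Ioc (-π) π, ‖X ω‖) * ((1/2 : ℝ)) ^ (n + 1)
        = 2 * π * ((∫ ω in Set.Ioc (-π) π, ‖X ω‖) * (1/2 : ℝ) ^ (n + 1)) from by ring]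
      have h3 := mul_le_mul_of_nonneg_right (hAbd ((n : ℤ) + 1))
        (by positivity : (0:ℝ) ≤ (1/2 : ℝ) ^ (n + 1))
      exact mul_le_mul_of_nonneg_left h3 (by positivity : (0:ℝ) ≤ 2 * π)
    have hswap := MeasureTheory.integral_tsum_of_summable_integral_norm hgint hgsum
    have hR : (∫ θ in Set.Ioc (0 : ℝ) (2 * π), ∑' n, g n θ) = 0 := by
      rw [MeasureTheory.integral_congr_ae (Filter.Eventually.of_forall fun θ => hgpt θ)]
      simp
    have hgval : ∀ n : ℕ, (∫ θ in Set.Ioc (0 : ℝ) (2 * π), g n θ)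
        = A ((n : ℤ) + 1) * ((1/2 : ℝ) : ℂ) ^ (n + 1)
          * (if ((n : ℤ) - N : ℤ) = 0 then ((2 * π : ℝ) : ℂ) else 0) := by
      intro n
      have hptw : ∀ θ : ℝ, g n θ = (A ((n : ℤ) + 1) * ((1/2 : ℝ) : ℂ) ^ (n + 1))
          * Complex.exp (Complex.I * θ * (((n : ℤ) - N : ℤ) : ℂ)) := by
        intro θ
        have e1 : (Complex.exp (Complex.I * θ)) ^ (n + 1)
            = Complex.exp (Complex.I * θ * ((n : ℂ) + 1)) := by
          rw [← Complex.exp_nat_mul]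
          congr 1
          push_cast
          ring
        have e2 : (((1/2 : ℝ) : ℂ) * Complex.exp (Complex.I * θ)) ^ (n + 1) * E θ
            = ((1/2 : ℝ) : ℂ) ^ (n + 1)
              * Complex.exp (Complex.I * θ * (((n : ℤ) - N : ℤ) : ℂ)) := by
          rw [hE]
          simp only
          rw [mul_pow, e1, mul_assoc, ← Complex.exp_add]
          congr 1
          congr 1
          push_cast
          ring
        rw [hg]
        simp only
        rw [mul_assoc, e2, ← mul_assoc]
      simp_rw [hptw]
      rw [MeasureTheory.integral_const_mul, integral_exp_Ioc ((n : ℤ) - N)]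
    have htsum : (∑' n : ℕ, ∫ θ in Set.Ioc (0 : ℝ) (2 * π), g n θ)
        = A ((N : ℤ) + 1) * ((1/2 : ℝ) : ℂ) ^ (N + 1) * ((2 * π : ℝ) : ℂ) := by
      rw [tsum_eq_single N ?_]
      · rw [hgval N]
        simp
      · intro n hn
        rw [hgval n, if_neg (fun h => hn (by exact_mod_cast sub_eq_zero.mp h)), mul_zero]
    have hfin : A ((N : ℤ) + 1) * ((1/2 : ℝ) : ℂ) ^ (N + 1) * ((2 * π : ℝ) : ℂ) = 0 := by
      rw [← htsum, hswap, hR]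
    have h2π : ((2 * π : ℝ) : ℂ) ≠ 0 := by
      simp only [ne_eq, Complex.ofReal_eq_zero]
      positivity
    have hhalf : ((1/2 : ℝ) : ℂ) ^ (N + 1) ≠ 0 := pow_ne_zero _ (by norm_num)
    rcases mul_eq_zero.mp hfin with h | h
    · rcases mul_eq_zero.mp h with h' | h'
      · exact h'
      · exact absurd h' hhalf
    · exact absurd h h2π

/-- Two band-limited sequences with spectrum in a proper arc which agree on `{t ≤ 0}`
are equal. -/
theorem bandlimited_unique (I : Arc) (y z : ℤ → ℂ)
    (hy : BandLimited I.set y) (hz : BandLimited I.set z)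
    (hagree : ∀ t : ℤ, t ≤ 0 → y t = z t) : y = z := by
  obtain ⟨-, Y, hY2, hYs, hYt⟩ := hy
  obtain ⟨-, Z, hZ2, hZs, hZt⟩ := hz
  have hYint : Integrable Y (volume.restrict (Set.Ioc (-π) π)) :=
    hY2.integrable (by norm_num)
  have hZint : Integrable Z (volume.restrict (Set.Ioc (-π) π)) :=
    hZ2.integrable (by norm_num)
  set D : ℝ → ℂ := fun ω => Y ω - Z ω with hD
  set X : ℝ → ℂ := (I.set).indicator D with hX
  have hXD : X =ᵐ[volume.restrict (Set.Ioc (-π) π)] D := by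
    filter_upwards [hYs, hZs] with ω h1 h2
    by_cases hω : ω ∈ I.set
    · rw [hX]; exact Set.indicator_of_mem hω D
    · rw [hX]
      rw [Set.indicator_of_notMem hω, hD]
      simp only
      rw [h1 hω, h2 hω, sub_zero]
  have hXi : Integrable X (volume.restrict (Set.Ioc (-π) π)) :=
    ((hYint.sub hZint).congr hXD.symm)
  have hsupp : ∀ ω, X ω ≠ 0 → ω ∈ I.set := by
    intro ω h
    by_contra hc
    exact h (Set.indicator_of_notMem hc D)
  have hint_eq : ∀ t : ℤ, (∫ ω in Set.Ioc (-π) π, X ω * Complex.exp (Complex.I * ω * t))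
      = (∫ ω in Set.Ioc (-π) π, Y ω * Complex.exp (Complex.I * ω * t))
        - ∫ ω in Set.Ioc (-π) π, Z ω * Complex.exp (Complex.I * ω * t) := by
    intro t
    rw [← MeasureTheory.integral_sub (integrable_mul_exp hYint t) (integrable_mul_exp hZint t)]
    refine MeasureTheory.integral_congr_ae ?_
    filter_upwards [hXD] with ω hω
    rw [hω, hD]
    ring
  have hinv : ∀ t : ℤ, y t - z t
      = ((1 / (2 * π) : ℝ) : ℂ) * ∫ ω in Set.Ioc (-π) π, X ω * Complex.exp (Complex.I * ω * t) := by
    intro t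
    rw [hYt t, hZt t, hint_eq t, invZ, invZ]
    ring
  have h2π : ((1 / (2 * π) : ℝ) : ℂ) ≠ 0 := by
    simp only [ne_eq, Complex.ofReal_eq_zero]
    positivity
  have h0 : ∀ t : ℤ, t ≤ 0 →
      (∫ ω in Set.Ioc (-π) π, X ω * Complex.exp (Complex.I * ω * t)) = 0 := by
    intro t ht
    have h1 := hinv t
    rw [sub_eq_zero.mpr (hagree t ht)] at h1
    rcases mul_eq_zero.mp h1.symm with h | h
    · exact absurd h h2π
    · exact h
  have hall := key I X hXi hsupp h0
  funext t
  have h1 := hinv t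
  rw [hall t, mul_zero] at h1
  exact sub_eq_zero.mp h1

end Stmt6Aux

/-- for `I ∈ J` and `x ∈ ℓ₂^{−,LBL}(I)`, there is a unique `x_BL ∈ ℓ₂^{BL}(I)`
with `x(t) = x_BL(t)` for all `t ≤ 0`: a band-limited sequence with spectrum in a proper arc
is uniquely determined by its trace on `{t ≤ 0}`. -/
theorem stmt_6 (I : Arc) (x : NegSeq) (hx : LBL I.set x) :
    ∃! xBL : ℤ → ℂ, BandLimited I.set xBL ∧ ∀ t : {t : ℤ // t ≤ 0}, x t = xBL t.1 := by
  obtain ⟨xBL, hBL, htr⟩ := hx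
  refine ⟨xBL, ⟨hBL, htr⟩, ?_⟩
  rintro y ⟨hyBL, hytr⟩
  exact Stmt6Aux.bandlimited_unique I y xBL hyBL hBL fun t ht => by
    rw [← hytr ⟨t, ht⟩, htr ⟨t, ht⟩]
end
end
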